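/- arXiv:2212.14607 — 5 statements merged into one kernel-verified Lean document; each statement's English description precedes it below -/
import Mathlib

section
/- Let A be a 0-1 matrix over the positive integers that is uniformly column finite and has no zero columns (for every i there exists j with A(j,i) = 1). Fix positive integers m, n, p with 1 ≤ p ≤ m−1, and suppose that |L_p^i(m,n)| = |L_p^j(m,n)| for all i, j ∈ N(m−p+1,n), where L_p^i(m,n) := {α ∈ L_p(m,n) : α_p = i}. Then |L_p(m,n)| · |L(m−p,n)| ≤ I(m−p+1,n) · |L(m,n)|. -/
/-- A finite word is admissible for `A` if consecutive letters are linked by `A`. -/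
def Adm (A : ℕ+ → ℕ+ → Bool) (w : List ℕ+) : Prop :=
  List.Chain' (fun a b => A a b = true) w

/-- `L(m,n)`: admissible words of length `m` whose last letter is at most `n`. -/
def LWords (A : ℕ+ → ℕ+ → Bool) (m : ℕ) (n : ℕ+) : Set (List ℕ+) :=
  {w : List ℕ+ | w.length = m ∧ Adm A w ∧ ∀ x ∈ w.getLast?, x ≤ n}

/-- `L_p(m,n)`: length-`p` prefixes of words in `L(m,n)`. -/
def LPref (A : ℕ+ → ℕ+ → Bool) (p m : ℕ) (n : ℕ+) : Set (List ℕ+) :=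
  {u : List ℕ+ | u.length = p ∧ ∃ w ∈ LWords A m n, u <+: w}

/-- `ρ_A^{-1}(i) = {j : A(j,i) = 1}`. -/
def rhoInv (A : ℕ+ → ℕ+ → Bool) (i : ℕ+) : Set ℕ+ := {j : ℕ+ | A j i = true}

/-- `ρ_A^{-1}(B) = ⋃_{i ∈ B} ρ_A^{-1}(i)`. -/
def rhoInvSet (A : ℕ+ → ℕ+ → Bool) (B : Set ℕ+) : Set ℕ+ := ⋃ i ∈ B, rhoInv A i

/-- `N(1,n) = {1,…,n}` and `N(m+1,n) = ρ_A^{-1}(N(m,n))` (value at `0` is junk). -/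
def NSet (A : ℕ+ → ℕ+ → Bool) (n : ℕ+) : ℕ → Set ℕ+
  | 0 => ∅
  | 1 => {i : ℕ+ | i ≤ n}
  | (m + 2) => rhoInvSet A (NSet A n (m + 1))

/-- `I(m,n) = max N(m,n)` (as a supremum in `ℕ`). -/
noncomputable def ISup (A : ℕ+ → ℕ+ → Bool) (n : ℕ+) (m : ℕ) : ℕ :=
  sSup ((fun i : ℕ+ => (i : ℕ)) '' NSet A n m)

section Aux
variable {A : ℕ+ → ℕ+ → Bool} {n : ℕ+}

lemma rhoInv_finite {M : ℕ} (hUCF : ∀ j : ℕ+, {i : ℕ+ | A i j = true}.encard ≤ M)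
    (i : ℕ+) : (rhoInv A i).Finite := by
  rw [← Set.encard_lt_top_iff]
  exact lt_of_le_of_lt (hUCF i) (WithTop.coe_lt_top M)

lemma NSet_succ (k : ℕ) (hk : 1 ≤ k) :
    NSet A n (k + 1) = rhoInvSet A (NSet A n k) := by
  match k, hk with
  | (k + 1), _ => rfl

lemma NSet_finite {M : ℕ} (hUCF : ∀ j : ℕ+, {i : ℕ+ | A i j = true}.encard ≤ M) :
    ∀ k, (NSet A n k).Finite
  | 0 => Set.finite_empty
  | 1 => Set.finite_Iic n
  | (k + 2) => Set.Finite.biUnion (NSet_finite hUCF (k + 1))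
      (fun i _ => rhoInv_finite hUCF i)

lemma NSet_nonempty (hnzc : ∀ i : ℕ+, ∃ j : ℕ+, A j i = true) :
    ∀ k, 1 ≤ k → (NSet A n k).Nonempty
  | 1, _ => ⟨1, n.one_le⟩
  | (k + 2), _ => by
    obtain ⟨i, hi⟩ := NSet_nonempty hnzc (k + 1) (Nat.le_add_left 1 k)
    obtain ⟨j, hj⟩ := hnzc i
    exact ⟨j, Set.mem_biUnion hi hj⟩

lemma head_mem_NSet : ∀ k, 1 ≤ k → ∀ v ∈ LWords A k n, ∀ h ∈ v.head?, h ∈ NSet A n k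
  | 1, _, v, hv, h, hh => by
    obtain ⟨hl, _, hlast⟩ := hv
    match v, hl with
    | [a], _ =>
      simp only [List.head?_cons, Option.mem_def, Option.some.injEq] at hh
      subst hh
      exact hlast a rfl
  | (k + 2), _, v, hv, h, hh => by
    obtain ⟨hl, hadm, hlast⟩ := hv
    match v, hl with
    | (a :: b :: t), hl =>
      simp only [List.head?_cons, Option.mem_def, Option.some.injEq] at hh
      subst hh
      have hadm' := (List.isChain_cons_cons.mp hadm)
      have hbt : (b :: t) ∈ LWords A (k + 1) n := by
        refine ⟨by simpa using hl, hadm'.2, ?_⟩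
        intro x hx
        exact hlast x (by rwa [List.getLast?_cons_cons])
      have hb : b ∈ NSet A n (k + 1) :=
        head_mem_NSet (k + 1) (Nat.le_add_left 1 k) _ hbt b rfl
      exact Set.mem_biUnion hb hadm'.1

end Aux

section Aux2
variable {A : ℕ+ → ℕ+ → Bool} {n : ℕ+}

lemma LWords_finite {M : ℕ} (hUCF : ∀ j : ℕ+, {i : ℕ+ | A i j = true}.encard ≤ M) :
    ∀ k, (LWords A k n).Finite
  | 0 => Set.Finite.subset (Set.finite_singleton [])
      (fun w hw => List.length_eq_zero_iff.mp hw.1)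
  | (k + 1) => by
    have IH : (LWords A k n).Finite := LWords_finite hUCF k
    have hsub : LWords A (k + 1) n ⊆
        ⋃ t ∈ LWords A k n, (fun a => a :: t) ''
          {a : ℕ+ | (t.head? = none ∧ a ≤ n) ∨ ∃ h ∈ t.head?, A a h = true} := by
      rintro w ⟨hl, hadm, hlast⟩
      match w, hl with
      | (a :: t), hl =>
        have ht : t ∈ LWords A k n := by
          refine ⟨by simpa using hl, hadm.tail, ?_⟩
          intro x hx
          refine hlast x ?_
          exact List.mem_getLast?_append_of_mem_getLast? (l₁ := [a]) hx
        refine Set.mem_biUnion ht ⟨a, ?_, rfl⟩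
        match t with
        | [] => exact Or.inl ⟨rfl, hlast a rfl⟩
        | (b :: t') => exact Or.inr ⟨b, rfl, (List.isChain_cons_cons.mp hadm).1⟩
    refine Set.Finite.subset (Set.Finite.biUnion IH (fun t _ => Set.Finite.image _ ?_)) hsub
    match t with
    | [] => exact Set.Finite.subset (Set.finite_Iic n) (by
        rintro a (⟨_, ha⟩ | ⟨h, hh, _⟩)
        · exact ha
        · simp at hh)
    | (b :: t') => exact Set.Finite.subset (rhoInv_finite hUCF b) (by
        rintro a (⟨ha, _⟩ | ⟨h, hh, hA⟩)
        · simp at ha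
        · simp only [List.head?_cons, Option.mem_def, Option.some.injEq] at hh
          subst hh; exact hA)

lemma LPref_eq_take {p : ℕ} {u w : List ℕ+} (hu : u.length = p) (huw : u <+: w) :
    u = w.take p := by
  rw [List.prefix_iff_eq_take] at huw
  rwa [hu] at huw

lemma LPref_finite {M : ℕ} (hUCF : ∀ j : ℕ+, {i : ℕ+ | A i j = true}.encard ≤ M)
    (p m : ℕ) : (LPref A p m n).Finite := by
  refine Set.Finite.subset (Set.Finite.image (List.take p) (LWords_finite hUCF m : (LWords A m n).Finite)) ?_
  rintro u ⟨hu, w, hw, huw⟩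
  exact ⟨w, hw, (LPref_eq_take hu huw).symm⟩

end Aux2

section Aux3
variable {A : ℕ+ → ℕ+ → Bool} {n : ℕ+}

lemma adm_of_prefix {u w : List ℕ+} (h : Adm A w) (huw : u <+: w) : Adm A u := by
  obtain ⟨r, hr⟩ := huw
  subst hr
  exact (List.isChain_append.mp h).1

lemma split_mem {p q : ℕ} (hp : 1 ≤ p) (hq : 1 ≤ q) {w : List ℕ+}
    (hw : w ∈ LWords A (p + q) n) :
    w.take p ∈ LPref A p (p + q) n ∧ w.drop p ∈ LWords A q n ∧
    ∃ i, (w.take p).getLast? = some i ∧ i ∈ NSet A n (q + 1) ∧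
      ∃ h ∈ (w.drop p).head?, A i h = true := by
  obtain ⟨hl, hadm, hlast⟩ := hw
  have hul : (w.take p).length = p := by
    rw [List.length_take, hl]; omega
  have hvl : (w.drop p).length = q := by
    rw [List.length_drop, hl]; omega
  have hvne : w.drop p ≠ [] := by
    intro hc; rw [hc] at hvl; simp at hvl; omega
  have hune : w.take p ≠ [] := by
    intro hc; rw [hc] at hul; simp at hul; omega
  have hsplit : w.take p ++ w.drop p = w := List.take_append_drop p w
  have hadm' : List.Chain' (fun a b => A a b = true) (w.take p ++ w.drop p) := by
    rwa [hsplit]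
  obtain ⟨hadmu, hadmv, hlink⟩ := List.isChain_append.mp hadm'
  have hvmem : w.drop p ∈ LWords A q n := by
    refine ⟨hvl, hadmv, ?_⟩
    intro x hx
    refine hlast x ?_
    rw [← hsplit, List.getLast?_append_of_ne_nil _ hvne]
    exact hx
  have humem : w.take p ∈ LPref A p (p + q) n :=
    ⟨hul, w, ⟨hl, hadm, hlast⟩, List.take_prefix p w⟩
  refine ⟨humem, hvmem, (w.take p).getLast hune, List.getLast?_eq_getLast hune, ?_, ?_⟩
  · rw [NSet_succ q hq]
    have hh : (w.drop p).head hvne ∈ NSet A n q :=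
      head_mem_NSet q hq _ hvmem _ (List.head?_eq_head hvne)
    refine Set.mem_biUnion hh ?_
    exact hlink _ (List.getLast?_eq_getLast hune) _ (List.head?_eq_head hvne)
  · exact ⟨(w.drop p).head hvne, List.head?_eq_head hvne,
      hlink _ (List.getLast?_eq_getLast hune) _ (List.head?_eq_head hvne)⟩

end Aux3

/-- let `A` be uniformly column finite with no zero columns, let
`1 ≤ p ≤ m − 1`, and assume the self-similar inverse image structure
`|L_p^i(m,n)| = |L_p^j(m,n)|` for all `i, j ∈ N(m−p+1,n)`, where
`L_p^i(m,n) = {α ∈ L_p(m,n) : α_p = i}`.  Then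
`|L_p(m,n)| · |L(m−p,n)| ≤ I(m−p+1,n) · |L(m,n)|`. -/
theorem stmt5 (A : ℕ+ → ℕ+ → Bool) (M : ℕ)
    (hUCF : ∀ j : ℕ+, {i : ℕ+ | A i j = true}.encard ≤ M)
    (hnzc : ∀ i : ℕ+, ∃ j : ℕ+, A j i = true)
    (m p : ℕ) (n : ℕ+) (hp : 1 ≤ p) (hpm : p ≤ m - 1) (hm : 1 ≤ m)
    (hss : ∀ i j : ℕ+, i ∈ NSet A n (m - p + 1) → j ∈ NSet A n (m - p + 1) →
      {u ∈ LPref A p m n | u.getLast? = some i}.ncard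
        = {u ∈ LPref A p m n | u.getLast? = some j}.ncard) :
    (LPref A p m n).ncard * (LWords A (m - p) n).ncard
      ≤ ISup A n (m - p + 1) * (LWords A m n).ncard := by
  classical
  set q := m - p with hqdef
  have hq : 1 ≤ q := by omega
  have hpq : p + q = m := by omega
  have finm : (LWords A m n).Finite := LWords_finite hUCF m
  have finq : (LWords A q n).Finite := LWords_finite hUCF q
  have finp : (LPref A p m n).Finite := LPref_finite hUCF p m
  have finN : (NSet A n (q + 1)).Finite := NSet_finite hUCF (q + 1)
  set Sm := finm.toFinset with hSmdef
  set Sq := finq.toFinset with hSqdef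
  set Sp := finp.toFinset with hSpdef
  set Nf := finN.toFinset with hNfdef
  set Pf : ℕ+ → Finset (List ℕ+) :=
    fun i => Sp.filter (fun u => u.getLast? = some i) with hPfdef
  set Sf : ℕ+ → Finset (List ℕ+) :=
    fun i => Sq.filter (fun v => ∃ h ∈ v.head?, A i h = true) with hSfdef
  set Em : ℕ+ → Finset (List ℕ+) :=
    fun i => ((Pf i) ×ˢ (Sf i)).image (fun uv => uv.1 ++ uv.2) with hEmdef
  -- basic membership facts
  have memPf : ∀ i u, u ∈ Pf i ↔ u ∈ LPref A p m n ∧ u.getLast? = some i := by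
    intro i u
    simp [hPfdef, hSpdef, Finset.mem_filter, finp.mem_toFinset]
  have memSf : ∀ i v, v ∈ Sf i ↔ v ∈ LWords A q n ∧ ∃ h ∈ v.head?, A i h = true := by
    intro i v
    simp [hSfdef, hSqdef, Finset.mem_filter, finq.mem_toFinset]
  -- elements of Em i are of the form u ++ v and have (take p ·).getLast? = some i
  have takeEm : ∀ i w, w ∈ Em i → (w.take p).getLast? = some i := by
    intro i w hw
    rw [hEmdef] at hw
    simp only [Finset.mem_image, Finset.mem_product, Prod.exists] at hw
    obtain ⟨u, v, ⟨hu, hv⟩, rfl⟩ := hw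
    rw [memPf] at hu
    have : (u ++ v).take p = u := by
      rw [← hu.1.1]; exact List.take_left
    rw [this]; exact hu.2
  -- K1 : Sm = Nf.biUnion Em
  have hSm : Sm = Nf.biUnion Em := by
    ext w
    simp only [Finset.mem_biUnion, hSmdef, finm.mem_toFinset]
    constructor
    · intro hw
      have hw' : w ∈ LWords A (p + q) n := by rwa [hpq]
      obtain ⟨hu, hv, i, hui, hiN, h, hh, hA⟩ := split_mem hp hq hw'
      refine ⟨i, finN.mem_toFinset.mpr hiN, ?_⟩
      rw [hEmdef]
      simp only [Finset.mem_image, Finset.mem_product, Prod.exists]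
      refine ⟨w.take p, w.drop p, ⟨?_, ?_⟩, List.take_append_drop p w⟩
      · rw [memPf]; exact ⟨by rwa [hpq] at hu, hui⟩
      · rw [memSf]; exact ⟨hv, h, hh, hA⟩
    · rintro ⟨i, hiN, hw⟩
      rw [hEmdef] at hw
      simp only [Finset.mem_image, Finset.mem_product, Prod.exists] at hw
      obtain ⟨u, v, ⟨hu, hv⟩, rfl⟩ := hw
      rw [memPf] at hu
      rw [memSf] at hv
      obtain ⟨⟨hul, w', hw', huw'⟩, hui⟩ := hu
      obtain ⟨⟨hvl, hvadm, hvlast⟩, h, hh, hA⟩ := hv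
      have hvne : v ≠ [] := by
        intro hc; rw [hc] at hvl; simp at hvl; omega
      refine ⟨?_, ?_, ?_⟩
      · rw [List.length_append, hul, hvl, hpq]
      · refine List.isChain_append.mpr ⟨adm_of_prefix hw'.2.1 huw', hvadm, ?_⟩
        intro x hx y hy
        rw [hui, Option.mem_def, Option.some.injEq] at hx
        rw [Option.mem_def] at hy hh
        rw [hh, Option.some.injEq] at hy
        subst hx; subst hy; exact hA
      · intro x hx
        rw [List.getLast?_append_of_ne_nil _ hvne] at hx
        exact hvlast x hx
  -- K2 : disjointness of Em
  have hEmdisj : ∀ i ∈ Nf, ∀ j ∈ Nf, i ≠ j → Disjoint (Em i) (Em j) := by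
    intro i _ j _ hij
    refine Finset.disjoint_left.mpr ?_
    intro w hwi hwj
    have h1 := takeEm i w hwi
    have h2 := takeEm j w hwj
    rw [h1, Option.some.injEq] at h2
    exact hij h2
  -- K3 : card of Em
  have hEmcard : ∀ i, (Em i).card = (Pf i).card * (Sf i).card := by
    intro i
    rw [hEmdef]
    rw [Finset.card_image_of_injOn, Finset.card_product]
    rintro ⟨u, v⟩ huv ⟨u', v'⟩ huv' heq
    simp only [Finset.mem_coe, Finset.mem_product] at huv huv'
    have hul : u.length = p := ((memPf i u).mp huv.1).1.1
    have hul' : u'.length = p := ((memPf i u').mp huv'.1).1.1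
    simp only at heq
    have e1 : (u ++ v).take p = u := by rw [← hul]; exact List.take_left
    have e2 : (u' ++ v').take p = u' := by rw [← hul']; exact List.take_left
    have huu : u = u' := by rw [← e1, ← e2, heq]
    subst huu
    have hvv : v = v' := List.append_cancel_left heq
    simp [hvv]
  -- K4 : Sp = Nf.biUnion Pf
  have hSp : Sp = Nf.biUnion Pf := by
    ext u
    simp only [Finset.mem_biUnion, hSpdef, finp.mem_toFinset]
    constructor
    · intro hu
      obtain ⟨hul, w, hw, huw⟩ := hu
      have hw' : w ∈ LWords A (p + q) n := by rwa [hpq]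
      obtain ⟨_, _, i, hui, hiN, _⟩ := split_mem hp hq hw'
      have hu' : u = w.take p := LPref_eq_take hul huw
      refine ⟨i, finN.mem_toFinset.mpr hiN, ?_⟩
      rw [memPf]
      exact ⟨⟨hul, w, hw, huw⟩, by rw [hu']; exact hui⟩
    · rintro ⟨i, _, hu⟩
      exact ((memPf i u).mp hu).1
  have hPfdisj : ∀ i ∈ Nf, ∀ j ∈ Nf, i ≠ j → Disjoint (Pf i) (Pf j) := by
    intro i _ j _ hij
    refine Finset.disjoint_left.mpr ?_
    intro u hui huj
    have h1 := ((memPf i u).mp hui).2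
    have h2 := ((memPf j u).mp huj).2
    rw [h1, Option.some.injEq] at h2
    exact hij h2
  -- K5 : Sq ⊆ Nf.biUnion Sf
  have hSq : Sq ⊆ Nf.biUnion Sf := by
    intro v hv
    rw [hSqdef, finq.mem_toFinset] at hv
    have hvne : v ≠ [] := by
      intro hc
      have := hv.1
      rw [hc] at this; simp at this; omega
    have hh : v.head hvne ∈ NSet A n q :=
      head_mem_NSet q hq v hv _ (List.head?_eq_head hvne)
    obtain ⟨i, hA⟩ := hnzc (v.head hvne)
    have hiN : i ∈ NSet A n (q + 1) := by
      rw [NSet_succ q hq]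
      exact Set.mem_biUnion hh hA
    rw [Finset.mem_biUnion]
    refine ⟨i, finN.mem_toFinset.mpr hiN, ?_⟩
    rw [memSf]
    exact ⟨hv, v.head hvne, List.head?_eq_head hvne, hA⟩
  -- K6 : constancy of card (Pf i) on Nf
  have hcoe : ∀ i : ℕ+, ({u ∈ LPref A p m n | u.getLast? = some i}).ncard = (Pf i).card := by
    intro i
    rw [← Set.ncard_coe_finset (Pf i)]
    congr 1
    ext u
    rw [Finset.mem_coe, memPf i u]
    exact Iff.rfl
  obtain ⟨i0, hi0⟩ := NSet_nonempty hnzc (q + 1) (by omega)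
  set c := (Pf i0).card with hcdef
  have hconst : ∀ i ∈ Nf, (Pf i).card = c := by
    intro i hi
    rw [hNfdef, finN.mem_toFinset] at hi
    have := hss i i0 hi hi0
    rwa [hcoe, hcoe] at this
  -- K7 : Nf.card ≤ ISup
  have hNI : Nf.card ≤ ISup A n (q + 1) := by
    have hbdd : BddAbove ((fun i : ℕ+ => (i : ℕ)) '' NSet A n (q + 1)) :=
      (finN.image _).bddAbove
    have hle : ∀ i ∈ Nf, (i : ℕ) ≤ ISup A n (q + 1) := by
      intro i hi
      exact le_csSup hbdd ⟨i, finN.mem_toFinset.mp hi, rfl⟩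
    calc Nf.card = (Nf.image (fun i : ℕ+ => (i : ℕ))).card :=
          (Finset.card_image_of_injective Nf PNat.coe_injective).symm
      _ ≤ (Finset.Icc 1 (ISup A n (q + 1))).card := by
          refine Finset.card_le_card ?_
          intro x hx
          rw [Finset.mem_image] at hx
          obtain ⟨i, hi, rfl⟩ := hx
          rw [Finset.mem_Icc]
          exact ⟨i.one_le, hle i hi⟩
      _ = ISup A n (q + 1) := by rw [Nat.card_Icc]; omega
  -- counting identities
  have cSm : Sm.card = ∑ i ∈ Nf, (Pf i).card * (Sf i).card := by
    rw [hSm, Finset.card_biUnion hEmdisj]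
    exact Finset.sum_congr rfl (fun i _ => hEmcard i)
  have cSp : Sp.card = Nf.card * c := by
    rw [hSp, Finset.card_biUnion hPfdisj]
    rw [Finset.sum_congr rfl hconst, Finset.sum_const, smul_eq_mul]
  have cSq : Sq.card ≤ ∑ i ∈ Nf, (Sf i).card :=
    le_trans (Finset.card_le_card hSq) (Finset.card_biUnion_le)
  -- final computation
  have g1 : (LPref A p m n).ncard = Sp.card := by
    exact Set.ncard_eq_toFinset_card _ finp
  have g2 : (LWords A q n).ncard = Sq.card := by
    exact Set.ncard_eq_toFinset_card _ finq
  have g3 : (LWords A m n).ncard = Sm.card := by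
    exact Set.ncard_eq_toFinset_card _ finm
  rw [g1, g2, g3]
  calc Sp.card * Sq.card = Nf.card * c * Sq.card := by rw [cSp]
    _ ≤ Nf.card * c * (∑ i ∈ Nf, (Sf i).card) := Nat.mul_le_mul_left _ cSq
    _ = Nf.card * (∑ i ∈ Nf, c * (Sf i).card) := by rw [mul_assoc, Finset.mul_sum]
    _ = Nf.card * Sm.card := by
        rw [cSm]
        congr 1
        exact Finset.sum_congr rfl (fun i hi => by rw [hconst i hi])
    _ ≤ ISup A n (q + 1) * Sm.card := Nat.mul_le_mul_right _ hNI
end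

section
/- Let A be the renewal matrix. The partition of the positive integers into H^(1) = {1} and H^(2) = {2,3,4,…} is an A-orthogonal division in which exactly one part is infinite, and the trivial partition consisting of the single set of all positive integers is not an A-orthogonal division. Consequently the minimal number m_A of parts of an A-orthogonal division for the renewal matrix equals 2, and the minimal number P_A of infinite parts among minimal A-orthogonal divisions equals 1. -/
/-- An `A`-orthogonal division: a partition of the positive integers into `m` parts
`H 0, …, H (m-1)` such that `|ρ_A^{-1}(k) ∩ H l| ≤ 1` for every `k` and every part `l`,
where `ρ_A^{-1}(k) = {j : A(j,k) = 1}`. -/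
def IsOrthDiv (A : ℕ+ → ℕ+ → Bool) (m : ℕ) (H : Fin m → Set ℕ+) : Prop :=
  (∀ x : ℕ+, ∃! l : Fin m, x ∈ H l) ∧
  ∀ (k : ℕ+) (l : Fin m), ({j : ℕ+ | A j k = true} ∩ H l).encard ≤ 1

/-- The renewal matrix: `A(i,j) = 1` iff `i = 1` or `j = i − 1`. -/
def renewal (i j : ℕ+) : Bool := decide (i = 1 ∨ (j : ℕ) + 1 = (i : ℕ))

/-- The division `H⁽¹⁾ = {1}`, `H⁽²⁾ = {2,3,4,…}`. -/
def renewalDiv : Fin 2 → Set ℕ+ := ![{1}, {x : ℕ+ | 2 ≤ x}]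

lemma rho_eq (k : ℕ+) : {j : ℕ+ | renewal j k = true} = {1, k + 1} := by
  ext j
  simp only [renewal, Set.mem_setOf_eq, decide_eq_true_eq, Set.mem_insert_iff,
    Set.mem_singleton_iff]
  constructor
  · rintro (h | h)
    · exact Or.inl h
    · right; exact PNat.coe_injective (by push_cast; omega)
  · rintro (h | h)
    · exact Or.inl h
    · right; subst h; push_cast; ring

lemma orth_renewalDiv : IsOrthDiv renewal 2 renewalDiv := by
  constructor
  · intro x
    rcases eq_or_ne x 1 with hx | hx
    · refine ⟨0, by simp [renewalDiv, hx], ?_⟩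
      intro l hl
      fin_cases l
      · rfl
      · exfalso
        simp [renewalDiv] at hl
        subst hx
        exact absurd hl (by decide)
    · have h2 : 2 ≤ x := by
        rcases x with ⟨n, hn⟩
        have : n ≠ 1 := fun h => hx (by subst h; rfl)
        exact (PNat.coe_le_coe 2 ⟨n, hn⟩).mp (by show (2:ℕ) ≤ n; omega)
      refine ⟨1, by simpa [renewalDiv] using h2, ?_⟩
      intro l hl
      fin_cases l
      · simp [renewalDiv] at hl; exact absurd hl hx
      · rfl
  · intro k l
    rw [rho_eq]
    fin_cases l
    · refine le_trans (Set.encard_mono ?_) (le_of_eq (Set.encard_singleton (1 : ℕ+)))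
      intro j hj
      simpa [renewalDiv] using hj.2
    · refine le_trans (Set.encard_mono ?_) (le_of_eq (Set.encard_singleton (k + 1)))
      rintro j ⟨hj1, hj2⟩
      rcases hj1 with h | h
      · exfalso
        rw [h] at hj2
        simp [renewalDiv] at hj2
      · exact h

lemma renewalDiv_infinite_parts : {l : Fin 2 | (renewalDiv l).Infinite} = {1} := by
  have h0 : ¬ (renewalDiv 0).Infinite := by
    have e0 : renewalDiv 0 = {1} := rfl
    rw [e0]
    exact (Set.finite_singleton 1).not_infinite
  have h1 : (renewalDiv 1).Infinite := by
    refine Set.infinite_of_injective_forall_mem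
      (f := fun n : ℕ => (⟨n + 2, by omega⟩ : ℕ+)) ?_ ?_
    · intro a b hab
      have := congrArg PNat.val hab
      simpa using this
    · intro n
      show (2 : ℕ+) ≤ _
      refine (PNat.coe_le_coe _ _).mp ?_
      simp
  ext l
  fin_cases l
  · simpa using h0
  · simpa using h1

/-- for the renewal matrix, the partition `{1}, {2,3,4,…}` is an
`A`-orthogonal division with exactly one infinite part, the trivial one-part partition
is not an `A`-orthogonal division, the minimal number `m_A` of parts of an
`A`-orthogonal division equals `2`, and the minimal number `P_A` of infinite parts
among minimal `A`-orthogonal divisions equals `1`. -/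
theorem stmt9 :
    IsOrthDiv renewal 2 renewalDiv ∧
    {l : Fin 2 | (renewalDiv l).Infinite}.ncard = 1 ∧
    ¬ IsOrthDiv renewal 1 (fun _ => Set.univ) ∧
    sInf {m : ℕ | ∃ H : Fin m → Set ℕ+, IsOrthDiv renewal m H} = 2 ∧
    sInf {p : ℕ | ∃ H : Fin 2 → Set ℕ+, IsOrthDiv renewal 2 H ∧
      {l : Fin 2 | (H l).Infinite}.ncard = p} = 1 := by
  have hncard : {l : Fin 2 | (renewalDiv l).Infinite}.ncard = 1 := by
    rw [renewalDiv_infinite_parts]; exact Set.ncard_singleton 1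
  have hnot1 : ∀ H : Fin 1 → Set ℕ+, ¬ IsOrthDiv renewal 1 H := by
    intro H ⟨hpart, hbound⟩
    have hmem : ∀ x : ℕ+, x ∈ H 0 := by
      intro x
      obtain ⟨l, hl, -⟩ := hpart x
      have : l = 0 := Subsingleton.elim _ _
      rwa [this] at hl
    have h := hbound 1 0
    rw [rho_eq] at h
    have heq : ({1, (1:ℕ+) + 1} : Set ℕ+) ∩ H 0 = {1, 2} := by
      rw [Set.inter_eq_left.mpr (fun j _ => hmem j)]
      have : (1 : ℕ+) + 1 = 2 := by decide
      rw [this]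
    rw [heq, Set.encard_pair (by decide : (1:ℕ+) ≠ 2)] at h
    exact absurd h (by norm_num)
  refine ⟨orth_renewalDiv, hncard, hnot1 _, ?_, ?_⟩
  · have h2 : 2 ∈ {m : ℕ | ∃ H : Fin m → Set ℕ+, IsOrthDiv renewal m H} :=
      ⟨renewalDiv, orth_renewalDiv⟩
    refine le_antisymm (Nat.sInf_le h2) (le_csInf ⟨2, h2⟩ ?_)
    rintro m ⟨H, hH⟩
    by_contra hlt
    interval_cases m
    · obtain ⟨l, -, -⟩ := hH.1 1
      exact l.elim0
    · exact hnot1 H hH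
  · have h1 : 1 ∈ {p : ℕ | ∃ H : Fin 2 → Set ℕ+, IsOrthDiv renewal 2 H ∧
        {l : Fin 2 | (H l).Infinite}.ncard = p} :=
      ⟨renewalDiv, orth_renewalDiv, hncard⟩
    refine le_antisymm (Nat.sInf_le h1) (le_csInf ⟨1, h1⟩ ?_)
    rintro p ⟨H, hH, hp⟩
    by_contra hlt
    have hp0 : {l : Fin 2 | (H l).Infinite}.ncard = 0 := by omega
    have hempty : {l : Fin 2 | (H l).Infinite} = ∅ :=
      (Set.ncard_eq_zero (Set.toFinite _)).mp hp0
    have hfin : ∀ l : Fin 2, (H l).Finite := by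
      intro l
      by_contra hinf
      exact absurd (hempty ▸ (Set.mem_setOf_eq ▸ hinf : l ∈ {l | (H l).Infinite}))
        (Set.notMem_empty l)
    have huniv : (Set.univ : Set ℕ+) ⊆ H 0 ∪ H 1 := by
      intro x _
      obtain ⟨l, hl, -⟩ := hH.1 x
      fin_cases l
      · exact Or.inl hl
      · exact Or.inr hl
    exact Set.infinite_univ (Set.Finite.subset ((hfin 0).union (hfin 1)) huniv)
end

section
/- Let A be the 0-1 matrix over the positive integers defined by A(i,j) = 1 if and only if i ∈ {2j−1, 2j}. Then every row of A has exactly one nonzero entry and every column has exactly two nonzero entries (so A is uniformly locally finite), and for all positive integers m and n, N(m,n) = {1,…,2^(m−1)·n}. Consequently I(m,n) = 2^(m−1)·n, and for every n, lim_{m→∞} (1/m)·log I(m,n) = log 2; hence the quantity 𝓘 := limsup_{n→∞} limsup_{m→∞} (1/m)·log I(m,n) equals log 2 > 0, so this locally finite matrix fails condition (SI). -/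
/-- The matrix of Example: `A(i,j) = 1` iff `i ∈ {2j−1, 2j}`. -/
def doubling (i j : ℕ+) : Bool :=
  decide ((i : ℕ) = 2 * (j : ℕ) - 1 ∨ (i : ℕ) = 2 * (j : ℕ))

lemma doubling_iff (i j : ℕ+) :
    doubling i j = true ↔ ((i : ℕ) = 2 * (j : ℕ) - 1 ∨ (i : ℕ) = 2 * (j : ℕ)) := by
  simp [doubling]

lemma row (i : ℕ+) : {j : ℕ+ | doubling i j = true}.encard = 1 := by
  have hi := i.pos
  have : {j : ℕ+ | doubling i j = true} = {⟨((i:ℕ)+1)/2, by omega⟩} := by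
    ext j
    have hj := j.pos
    simp only [Set.mem_setOf_eq, Set.mem_singleton_iff, doubling_iff]
    constructor
    · rintro h
      apply PNat.coe_injective
      simp only [PNat.mk_coe]
      omega
    · rintro rfl
      simp only [PNat.mk_coe]
      omega
  rw [this]; exact Set.encard_singleton _

lemma col (j : ℕ+) : {i : ℕ+ | doubling i j = true}.encard = 2 := by
  have hj := j.pos
  have : {i : ℕ+ | doubling i j = true} =
      {⟨2*(j:ℕ)-1, by omega⟩, ⟨2*(j:ℕ), by omega⟩} := by
    ext i
    have hi := i.pos
    simp only [Set.mem_setOf_eq, Set.mem_insert_iff, Set.mem_singleton_iff, doubling_iff]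
    constructor
    · rintro (h | h) <;> [left; right] <;> exact PNat.coe_injective (by simp only [PNat.mk_coe]; omega)
    · rintro (rfl | rfl) <;> simp
  rw [this]; refine Set.encard_pair ?_
  intro h
  have := congrArg (fun x : ℕ+ => (x : ℕ)) h
  simp at this
  omega

lemma nset (m : ℕ) (hm : 1 ≤ m) (n : ℕ+) :
    NSet doubling n m = {i : ℕ+ | (i : ℕ) ≤ 2 ^ (m - 1) * (n : ℕ)} := by
  induction m with
  | zero => omega
  | succ m ih =>
    rcases Nat.eq_or_lt_of_le hm with h | h
    · have : m = 0 := by omega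
      subst this
      ext i
      simp [NSet, ← PNat.coe_le_coe]
    · have hm1 : 1 ≤ m := by omega
      obtain ⟨k, rfl⟩ : ∃ k, m = k + 1 := ⟨m - 1, by omega⟩
      show NSet doubling n (k + 2) = _
      rw [NSet, ih hm1]
      ext j
      have hj := j.pos
      simp only [rhoInvSet, rhoInv, Set.mem_iUnion, Set.mem_setOf_eq, doubling_iff]
      constructor
      · rintro ⟨i, hi, (h | h)⟩ <;>
        · have := i.pos
          have h2 : (2:ℕ)^(k+1)*(n:ℕ) = 2 * (2^k*(n:ℕ)) := by ring
          simp only [Nat.add_sub_cancel] at *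
          omega
      · intro hle
        simp only [Nat.add_sub_cancel] at *
        refine ⟨⟨((j:ℕ)+1)/2, by omega⟩, ?_, ?_⟩
        · simp only [Set.mem_setOf_eq, PNat.mk_coe]
          have h2 : (2:ℕ)^(k+1)*(n:ℕ) = 2 * (2^k*(n:ℕ)) := by ring
          omega
        · simp only [PNat.mk_coe]
          omega

lemma isup (m : ℕ) (hm : 1 ≤ m) (n : ℕ+) :
    ISup doubling n m = 2 ^ (m - 1) * (n : ℕ) := by
  have hn := n.pos
  have hK : 1 ≤ 2 ^ (m-1) * (n:ℕ) := Nat.one_le_iff_ne_zero.2 (by positivity)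
  rw [ISup, nset m hm n]
  apply le_antisymm
  · apply csSup_le
    · exact ⟨(2 ^ (m-1) * (n:ℕ)), ⟨⟨_, hK⟩, le_refl (2 ^ (m-1) * (n:ℕ)), rfl⟩⟩
    · rintro x ⟨i, hi, rfl⟩; exact hi
  · apply le_csSup
    · exact ⟨2 ^ (m-1) * (n:ℕ), by rintro x ⟨i, hi, rfl⟩; exact hi⟩
    · exact ⟨⟨_, hK⟩, le_refl (2 ^ (m-1) * (n:ℕ)), rfl⟩

lemma tend (n : ℕ+) :
    Filter.Tendsto (fun m : ℕ => Real.log (ISup doubling n m) / (m : ℝ))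
      Filter.atTop (nhds (Real.log 2)) := by
  have hn := n.pos
  have heq : ∀ᶠ m : ℕ in Filter.atTop,
      Real.log (ISup doubling n m) / (m : ℝ)
        = Real.log 2 + (Real.log (n:ℝ) - Real.log 2) / (m:ℝ) := by
    filter_upwards [Filter.eventually_ge_atTop 1] with m hm
    rw [isup m hm n]
    have h2 : ((2 ^ (m-1) * (n:ℕ) : ℕ) : ℝ) = 2 ^ (m-1) * (n:ℝ) := by push_cast; ring
    rw [h2, Real.log_mul (by positivity) (by positivity), Real.log_pow]
    have hm0 : (m:ℝ) ≠ 0 := by positivity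
    have hcast : ((m - 1 : ℕ) : ℝ) = (m:ℝ) - 1 := by
      push_cast [hm]; ring
    rw [hcast]
    field_simp
    ring
  refine Filter.Tendsto.congr' (Filter.EventuallyEq.symm heq) ?_
  have : Filter.Tendsto (fun _ : ℕ => Real.log 2) Filter.atTop (nhds (Real.log 2)) := tendsto_const_nhds
  have h0 : Filter.Tendsto (fun m : ℕ => (Real.log (n:ℝ) - Real.log 2) / (m:ℝ))
      Filter.atTop (nhds 0) := tendsto_const_div_atTop_nhds_zero_nat _
  simpa using this.add h0


/-- for the matrix `A(i,j) = 1 ⟺ i ∈ {2j−1,2j}`, every row has exactly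
one nonzero entry and every column exactly two (so `A` is uniformly locally finite),
`N(m,n) = {1,…,2^(m−1)·n}`, hence `I(m,n) = 2^(m−1)·n`,
`lim_{m→∞} (1/m)·log I(m,n) = log 2` for every `n`, and the quantity
`𝓘 = limsup_{n→∞} limsup_{m→∞} (1/m)·log I(m,n)` equals `log 2 > 0`;
so this locally finite matrix fails condition (SI). -/
theorem stmt11 :
    (∀ i : ℕ+, {j : ℕ+ | doubling i j = true}.encard = 1) ∧
    (∀ j : ℕ+, {i : ℕ+ | doubling i j = true}.encard = 2) ∧
    (∀ m : ℕ, 1 ≤ m → ∀ n : ℕ+,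
      NSet doubling n m = {i : ℕ+ | (i : ℕ) ≤ 2 ^ (m - 1) * (n : ℕ)}) ∧
    (∀ m : ℕ, 1 ≤ m → ∀ n : ℕ+, ISup doubling n m = 2 ^ (m - 1) * (n : ℕ)) ∧
    (∀ n : ℕ+,
      Filter.Tendsto (fun m : ℕ => Real.log (ISup doubling n m) / (m : ℝ))
        Filter.atTop (nhds (Real.log 2))) ∧
    Filter.limsup (fun n : ℕ+ =>
        Filter.limsup (fun m : ℕ => Real.log (ISup doubling n m) / (m : ℝ))
          Filter.atTop) Filter.atTop = Real.log 2 ∧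
    0 < Real.log 2 := by
  refine ⟨row, col, nset, isup, tend, ?_, Real.log_pos (by norm_num)⟩
  have h : ∀ n : ℕ+,
      Filter.limsup (fun m : ℕ => Real.log (ISup doubling n m) / (m : ℝ))
        Filter.atTop = Real.log 2 := fun n => (tend n).limsup_eq
  simp only [h]
  exact Filter.limsup_const _
end

section
/- Let A be a 0-1 matrix over the positive integers that is uniformly column finite and topologically mixing. Then for every positive integer n and every positive integer j ≤ n, liminf_{m→∞} (1/m)·log |L(m,n)| ≥ limsup_{m→∞} (1/m)·log ℓ_m(j). -/
/-- Loops: admissible words of length `m+1` whose first and last letter both equal `j`. -/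
def Loops (A : ℕ+ → ℕ+ → Bool) (m : ℕ) (j : ℕ+) : Set (List ℕ+) :=
  {w : List ℕ+ | w.length = m + 1 ∧ Adm A w ∧ w.head? = some j ∧ w.getLast? = some j}

open Filter Set

private lemma ncard_prod' {α β : Type*} (s : Set α) (t : Set β) :
    (s ×ˢ t).ncard = s.ncard * t.ncard := by
  rw [← Nat.card_coe_set_eq, Nat.card_congr (Equiv.Set.prod s t), Nat.card_prod,
    Nat.card_coe_set_eq, Nat.card_coe_set_eq]

private lemma encard_eq_ncard {α : Type*} {s : Set α} (hs : s.Finite) :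
    s.encard = (s.ncard : ℕ∞) := by
  rw [hs.encard_eq_coe_toFinset_card, Set.ncard_eq_toFinset_card s hs]

private lemma encard_biUnion_le' {α : Type*} (T : ℕ+ → Set (List α)) (B : ℕ∞)
    (S : Set ℕ+) (hS : S.Finite) : (∀ x ∈ S, (T x).encard ≤ B) →
    (⋃ x ∈ S, T x).encard ≤ S.ncard * B := by
  refine Set.Finite.induction_on S hS (by simp) ?_
  rintro a S' ha hS' ih hB
  rw [Set.biUnion_insert]
  calc (T a ∪ ⋃ x ∈ S', T x).encard ≤ (T a).encard + (⋃ x ∈ S', T x).encard :=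
        Set.encard_union_le _ _
    _ ≤ B + (S'.ncard : ℕ∞) * B := by
        gcongr
        · exact hB a (Set.mem_insert _ _)
        · exact ih fun x hx => hB x (Set.mem_insert_of_mem _ hx)
    _ = ((insert a S').ncard : ℕ∞) * B := by
        rw [Set.ncard_insert_of_notMem ha hS']
        push_cast
        ring

private lemma words_encard (R : ℕ+ → ℕ+ → Prop) (M : ℕ)
    (hR : ∀ a, {b | R a b}.encard ≤ (M : ℕ∞)) :
    ∀ (m : ℕ) (S : Set ℕ+), S.Finite →
      {w : List ℕ+ | w.length = m + 1 ∧ List.Chain' R w ∧ ∀ x ∈ w.head?, x ∈ S}.encard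
        ≤ ((S.ncard * M ^ m : ℕ) : ℕ∞) := by
  intro m
  induction m with
  | zero =>
    intro S hS
    have hsub : {w : List ℕ+ | w.length = 0 + 1 ∧ List.Chain' R w ∧ ∀ x ∈ w.head?, x ∈ S}
        ⊆ (fun x : ℕ+ => [x]) '' S := by
      rintro w ⟨hlen, -, hhd⟩
      match w, hlen with
      | [x], _ => exact ⟨x, hhd x rfl, rfl⟩
    calc _ ≤ ((fun x : ℕ+ => [x]) '' S).encard := Set.encard_mono hsub
      _ ≤ S.encard := Set.encard_image_le _ _
      _ = ((S.ncard * M ^ 0 : ℕ) : ℕ∞) := by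
          rw [encard_eq_ncard hS]; simp
  | succ m ih =>
    intro S hS
    have hsub : {w : List ℕ+ | w.length = m + 1 + 1 ∧ List.Chain' R w ∧ ∀ x ∈ w.head?, x ∈ S}
        ⊆ ⋃ x ∈ S, (fun t => x :: t) ''
            {w : List ℕ+ | w.length = m + 1 ∧ List.Chain' R w ∧ ∀ y ∈ w.head?, y ∈ {b | R x b}} := by
      rintro w ⟨hlen, hch, hhd⟩
      match w with
      | x :: t =>
        have hx : x ∈ S := hhd x rfl
        replace hch := List.isChain_cons.mp hch
        exact Set.mem_biUnion hx ⟨t, ⟨by simpa using hlen, hch.2, hch.1⟩, rfl⟩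
    refine le_trans (Set.encard_mono hsub) ?_
    refine le_trans (encard_biUnion_le' _ ((M ^ (m + 1) : ℕ) : ℕ∞) S hS ?_) ?_
    · intro x hx
      have hCx : {b | R x b}.Finite := Set.finite_of_encard_le_coe (hR x)
      have hCxcard : {b | R x b}.ncard ≤ M := by
        have := hR x
        rw [encard_eq_ncard hCx] at this
        exact_mod_cast this
      calc ((fun t => x :: t) ''
            {w : List ℕ+ | w.length = m + 1 ∧ List.Chain' R w ∧ ∀ y ∈ w.head?, y ∈ {b | R x b}}).encard
          = {w : List ℕ+ | w.length = m + 1 ∧ List.Chain' R w ∧ ∀ y ∈ w.head?, y ∈ {b | R x b}}.encard := by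
            apply Set.InjOn.encard_image
            intro a _ b _ h
            simpa using h
        _ ≤ (({b | R x b}).ncard * M ^ m : ℕ) := ih _ hCx
        _ ≤ ((M ^ (m + 1) : ℕ) : ℕ∞) := by
            rw [Nat.cast_le]
            calc {b | R x b}.ncard * M ^ m ≤ M * M ^ m := by gcongr
              _ = M ^ (m + 1) := (pow_succ' M m).symm
    · rw [Nat.cast_mul]

private lemma Iic_ncard (n : ℕ+) : (Set.Iic n).ncard = (n : ℕ) := by
  have : (Set.Iic n) = (↑(Finset.Icc 1 n) : Set ℕ+) := by
    ext x
    simp [x.one_le]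
  rw [this, Set.ncard_coe_finset, PNat.card_Icc]
  simp

private lemma lwords_encard (A : ℕ+ → ℕ+ → Bool) (M : ℕ)
    (hUCF : ∀ j : ℕ+, {i : ℕ+ | A i j = true}.encard ≤ M) (m : ℕ) (n : ℕ+) :
    (LWords A (m + 1) n).encard ≤ (((n : ℕ) * M ^ m : ℕ) : ℕ∞) := by
  set R : ℕ+ → ℕ+ → Prop := fun a b => A b a = true with hRdef
  have hR : ∀ a, {b | R a b}.encard ≤ (M : ℕ∞) := fun a => hUCF a
  have hsub : LWords A (m + 1) n ⊆ List.reverse ''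
      {w : List ℕ+ | w.length = m + 1 ∧ List.Chain' R w ∧ ∀ x ∈ w.head?, x ∈ Set.Iic n} := by
    rintro w ⟨hlen, hadm, hlast⟩
    refine ⟨w.reverse, ⟨by simpa using hlen, ?_, ?_⟩, by simp⟩
    · exact List.isChain_reverse.mpr hadm
    · intro x hx
      rw [List.head?_reverse] at hx
      exact hlast x hx
  calc (LWords A (m + 1) n).encard
      ≤ (List.reverse ''
          {w : List ℕ+ | w.length = m + 1 ∧ List.Chain' R w ∧ ∀ x ∈ w.head?, x ∈ Set.Iic n}).encard :=
        Set.encard_mono hsub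
    _ ≤ {w : List ℕ+ | w.length = m + 1 ∧ List.Chain' R w ∧ ∀ x ∈ w.head?, x ∈ Set.Iic n}.encard :=
        Set.encard_image_le _ _
    _ ≤ (((Set.Iic n).ncard * M ^ m : ℕ) : ℕ∞) := words_encard R M hR m _ (Set.finite_Iic n)
    _ = (((n : ℕ) * M ^ m : ℕ) : ℕ∞) := by rw [Iic_ncard]

private lemma lwords_finite (A : ℕ+ → ℕ+ → Bool) (M : ℕ)
    (hUCF : ∀ j : ℕ+, {i : ℕ+ | A i j = true}.encard ≤ M) (m : ℕ) (n : ℕ+) :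
    (LWords A m n).Finite := by
  cases m with
  | zero =>
    apply Set.Finite.subset (Set.finite_singleton ([] : List ℕ+))
    rintro w ⟨hlen, -, -⟩
    simpa [List.length_eq_zero_iff] using hlen
  | succ m => exact Set.finite_of_encard_le_coe (lwords_encard A M hUCF m n)


private lemma count_lemma (A : ℕ+ → ℕ+ → Bool) (n j : ℕ+) (hj : j ≤ n)
    (hfin : ∀ k, (LWords A k n).Finite) (m₀ : ℕ) (hm₀ : 1 ≤ m₀) (s : ℕ) (w₀ : List ℕ+)
    (hw₀ : w₀.length = s + 1 ∧ Adm A w₀ ∧ w₀.head? = some j ∧ w₀.getLast? = some j) :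
    ∀ q : ℕ, (Loops A m₀ j).ncard ^ q ≤ (LWords A (s + 1 + q * m₀) n).ncard := by
  set T : ℕ → Set (List ℕ+) :=
    fun k => {w : List ℕ+ | w.length = k ∧ Adm A w ∧ w.getLast? = some j} with hTdef
  have hTsub : ∀ k, T k ⊆ LWords A k n := by
    rintro k w ⟨hlen, hadm, hlast⟩
    refine ⟨hlen, hadm, ?_⟩
    intro x hx
    rw [hlast] at hx
    obtain rfl : j = x := by simpa using hx
    exact hj
  have hTfin : ∀ k, (T k).Finite := fun k => (hfin k).subset (hTsub k)
  -- the key concatenation step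
  have hstep : ∀ k, (T k).ncard * (Loops A m₀ j).ncard ≤ (T (k + m₀)).ncard := by
    intro k
    set Φ : List ℕ+ × List ℕ+ → List ℕ+ := fun p => p.1 ++ p.2.tail with hΦdef
    have himg : Φ '' (T k ×ˢ Loops A m₀ j) ⊆ T (k + m₀) := by
      rintro - ⟨⟨u, w⟩, ⟨⟨hul, hua, hulast⟩, ⟨hwl, hwa, hwh, hwlast⟩⟩, rfl⟩
      have hwcons : j :: w.tail = w := List.cons_head?_tail hwh
      have htlen : w.tail.length = m₀ := by
        rw [List.length_tail, hwl]
        omega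
      have htne : w.tail ≠ [] := by
        apply List.ne_nil_of_length_pos
        omega
      refine ⟨?_, ?_, ?_⟩
      · simp only [Φ, List.length_append, hul, htlen]
      · refine List.IsChain.append hua (List.IsChain.tail hwa) ?_
        intro x hx y hy
        rw [hulast] at hx
        obtain rfl : j = x := by simpa using hx
        have hch : List.Chain' (fun a b => A a b = true) (j :: w.tail) := by
          rw [hwcons]; exact hwa
        exact (List.isChain_cons.mp hch).1 y hy
      · show (u ++ w.tail).getLast? = some j
        rw [List.getLast?_append_of_ne_nil _ htne]
        have : ([j] ++ w.tail).getLast? = w.tail.getLast? :=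
          List.getLast?_append_of_ne_nil _ htne
        rw [show ([j] ++ w.tail) = j :: w.tail from rfl, hwcons] at this
        rw [← this, hwlast]
    have hinj : Set.InjOn Φ (T k ×ˢ Loops A m₀ j) := by
      rintro ⟨u₁, w₁⟩ ⟨⟨hul₁, -, -⟩, ⟨-, -, hwh₁, -⟩⟩ ⟨u₂, w₂⟩ ⟨⟨hul₂, -, -⟩, ⟨-, -, hwh₂, -⟩⟩ heq
      obtain ⟨h1, h2⟩ := List.append_inj heq (hul₁.trans hul₂.symm)
      have h2' : w₁.tail = w₂.tail := h2
      have hwh₁' : w₁.head? = some j := hwh₁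
      have hwh₂' : w₂.head? = some j := hwh₂
      have : w₁ = w₂ := by
        rw [← List.cons_head?_tail hwh₁', ← List.cons_head?_tail hwh₂', h2']
      exact Prod.ext h1 this
    calc (T k).ncard * (Loops A m₀ j).ncard = (T k ×ˢ Loops A m₀ j).ncard :=
          (ncard_prod' _ _).symm
      _ = (Φ '' (T k ×ˢ Loops A m₀ j)).ncard := (Set.ncard_image_of_injOn hinj).symm
      _ ≤ (T (k + m₀)).ncard := Set.ncard_le_ncard himg (hTfin _)
  have hbase : 1 ≤ (T (s + 1)).ncard := by
    rw [Nat.one_le_iff_ne_zero, ← Nat.pos_iff_ne_zero, Set.ncard_pos (hTfin _)]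
    exact ⟨w₀, hw₀.1, hw₀.2.1, hw₀.2.2.2⟩
  have hpow : ∀ q : ℕ, (Loops A m₀ j).ncard ^ q ≤ (T (s + 1 + q * m₀)).ncard := by
    intro q
    induction q with
    | zero => simpa using hbase
    | succ q ih =>
      have harith : s + 1 + (q + 1) * m₀ = s + 1 + q * m₀ + m₀ := by ring
      rw [harith, pow_succ]
      calc (Loops A m₀ j).ncard ^ q * (Loops A m₀ j).ncard
          ≤ (T (s + 1 + q * m₀)).ncard * (Loops A m₀ j).ncard := by gcongr
        _ ≤ (T (s + 1 + q * m₀ + m₀)).ncard := hstep _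
  intro q
  exact (hpow q).trans (Set.ncard_le_ncard (hTsub _) (hfin _))


private lemma g_bound (A : ℕ+ → ℕ+ → Bool) (M : ℕ)
    (hUCF : ∀ j : ℕ+, {i : ℕ+ | A i j = true}.encard ≤ M) (n : ℕ+) (m : ℕ) :
    Real.log ((LWords A m n).ncard) / (m : ℝ)
      ≤ Real.log ((n : ℕ) : ℝ) + Real.log ((M : ℝ) + 1) := by
  have hn1 : (1 : ℝ) ≤ ((n : ℕ) : ℝ) := by exact_mod_cast n.one_le
  have hA : 0 ≤ Real.log ((n : ℕ) : ℝ) := Real.log_nonneg hn1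
  have hB : 0 ≤ Real.log ((M : ℝ) + 1) := by
    apply Real.log_nonneg
    have : (0 : ℝ) ≤ (M : ℝ) := Nat.cast_nonneg M
    linarith
  cases m with
  | zero =>
    rw [Nat.cast_zero, div_zero]
    linarith
  | succ m =>
    have henc := lwords_encard A M hUCF m n
    have hfinw := Set.finite_of_encard_le_coe henc
    have hcard : (LWords A (m + 1) n).ncard ≤ (n : ℕ) * M ^ m := by
      rw [encard_eq_ncard hfinw, Nat.cast_le] at henc
      exact henc
    have hcard2 : (LWords A (m + 1) n).ncard ≤ (n : ℕ) * (M + 1) ^ m :=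
      hcard.trans (by gcongr <;> omega)
    rcases Nat.eq_zero_or_pos (LWords A (m + 1) n).ncard with h0 | hpos
    · rw [h0, Nat.cast_zero, Real.log_zero, zero_div]
      linarith
    · have hlogle : Real.log ((LWords A (m + 1) n).ncard)
          ≤ Real.log (((n : ℕ) : ℝ) * ((M : ℝ) + 1) ^ m) := by
        apply Real.log_le_log (by exact_mod_cast hpos)
        calc ((LWords A (m + 1) n).ncard : ℝ) ≤ (((n : ℕ) * (M + 1) ^ m : ℕ) : ℝ) := by
              exact_mod_cast hcard2
          _ = ((n : ℕ) : ℝ) * ((M : ℝ) + 1) ^ m := by push_cast; ring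
      rw [Real.log_mul (by positivity) (by positivity), Real.log_pow] at hlogle
      rw [div_le_iff₀ (by positivity : (0 : ℝ) < ((m + 1 : ℕ) : ℝ))]
      push_cast
      push_cast at hlogle
      nlinarith [hlogle, hA, hB]


/-- let `A` be uniformly column finite and topologically mixing.
Then for every `n` and every `j ≤ n`,
`liminf_{m→∞} (1/m)·log |L(m,n)| ≥ limsup_{m→∞} (1/m)·log ℓ_m(j)`,
where `ℓ_m(j)` is the number of admissible words of length `m+1` whose first and last
letters both equal `j`. -/
theorem stmt17 (A : ℕ+ → ℕ+ → Bool) (M : ℕ)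
    (hUCF : ∀ j : ℕ+, {i : ℕ+ | A i j = true}.encard ≤ M)
    (hmix : ∀ i j : ℕ+, ∃ N : ℕ, ∀ m : ℕ, N ≤ m →
      ∃ w : List ℕ+, w.length = m + 1 ∧ Adm A w ∧
        w.head? = some i ∧ w.getLast? = some j)
    (n j : ℕ+) (hj : j ≤ n) :
    Filter.limsup (fun m : ℕ => Real.log ((Loops A m j).ncard) / (m : ℝ)) Filter.atTop
      ≤ Filter.liminf (fun m : ℕ => Real.log ((LWords A m n).ncard) / (m : ℝ))
          Filter.atTop := by
  have hfin : ∀ k, (LWords A k n).Finite := fun k => lwords_finite A M hUCF k n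
  have hg0 : ∀ m : ℕ, 0 ≤ Real.log ((LWords A m n).ncard) / (m : ℝ) := fun m =>
    div_nonneg (Real.log_natCast_nonneg _) (Nat.cast_nonneg m)
  have hcobg : Filter.IsCoboundedUnder (· ≥ ·) Filter.atTop
      (fun m : ℕ => Real.log ((LWords A m n).ncard) / (m : ℝ)) :=
    Filter.IsBounded.isCobounded_flip (Filter.isBoundedUnder_of (r := (· ≤ ·))
      ⟨Real.log ((n : ℕ) : ℝ) + Real.log ((M : ℝ) + 1), fun m => g_bound A M hUCF n m⟩)
  have hcobf : Filter.IsCoboundedUnder (· ≤ ·) Filter.atTop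
      (fun m : ℕ => Real.log ((Loops A m j).ncard) / (m : ℝ)) :=
    Filter.IsBounded.isCobounded_flip (Filter.isBoundedUnder_of (r := (· ≥ ·))
      ⟨0, fun m => div_nonneg (Real.log_natCast_nonneg _) (Nat.cast_nonneg m)⟩)
  have key : ∀ m₀ : ℕ, Real.log ((Loops A m₀ j).ncard) / (m₀ : ℝ)
      ≤ Filter.liminf (fun m : ℕ => Real.log ((LWords A m n).ncard) / (m : ℝ))
          Filter.atTop := by
    intro m₀
    by_cases hsmall : Real.log ((Loops A m₀ j).ncard) ≤ 0 ∨ m₀ = 0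
    · have h1 : Real.log ((Loops A m₀ j).ncard) / (m₀ : ℝ) ≤ 0 := by
        rcases hsmall with h | h
        · exact div_nonpos_of_nonpos_of_nonneg h (Nat.cast_nonneg _)
        · rw [h, Nat.cast_zero, div_zero]
      exact h1.trans (Filter.le_liminf_of_le hcobg (Filter.Eventually.of_forall hg0))
    · push_neg at hsmall
      obtain ⟨hL0, hm₀⟩ := hsmall
      have hℓ1 : 1 ≤ (Loops A m₀ j).ncard := by
        rcases Nat.eq_zero_or_pos (Loops A m₀ j).ncard with h | h
        · rw [h] at hL0; norm_num [Real.log_zero] at hL0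
        · exact h
      set ℓ := (Loops A m₀ j).ncard with hℓdef
      set L0 := Real.log (ℓ : ℝ) with hL0def
      have hm₀1 : 1 ≤ m₀ := Nat.one_le_iff_ne_zero.mpr hm₀
      have hm₀R : (0 : ℝ) < (m₀ : ℝ) := by exact_mod_cast Nat.pos_of_ne_zero hm₀
      by_contra hcon
      push_neg at hcon
      obtain ⟨a, ha1, ha2⟩ := exists_between hcon
      have key2 : a ≤ Filter.liminf (fun m : ℕ => Real.log ((LWords A m n).ncard) / (m : ℝ))
          Filter.atTop := by
        apply Filter.le_liminf_of_le hcobg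
        obtain ⟨N, hN⟩ := hmix j j
        have haL : a * (m₀ : ℝ) < L0 := (lt_div_iff₀ hm₀R).mp ha2
        set δ := L0 - a * (m₀ : ℝ) with hδdef
        have hδ : 0 < δ := by rw [hδdef]; linarith
        have hev1 : ∀ᶠ m : ℕ in Filter.atTop, N + 1 + m₀ ≤ m := Filter.eventually_ge_atTop _
        have hev2 : ∀ᶠ m : ℕ in Filter.atTop,
            ((N : ℝ) + (m₀ : ℝ) + 1) * L0 / δ ≤ (m : ℝ) :=
          tendsto_natCast_atTop_atTop.eventually_ge_atTop _
        filter_upwards [hev1, hev2] with m hm1 hm2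
        set q := (m - 1 - N) / m₀ with hqdef
        set r := (m - 1 - N) % m₀ with hrdef
        have hdm : m₀ * q + r = m - 1 - N := Nat.div_add_mod _ _
        have hrlt : r < m₀ := Nat.mod_lt _ (by omega)
        have hcomm : m₀ * q = q * m₀ := Nat.mul_comm _ _
        set s := m - 1 - q * m₀ with hsdef
        have hsN : N ≤ s := by omega
        have hms : m = s + 1 + q * m₀ := by omega
        obtain ⟨w₀, hw₀⟩ := hN s hsN
        have hcount := count_lemma A n j hj hfin m₀ hm₀1 s w₀
          ⟨hw₀.1, hw₀.2.1, hw₀.2.2.1, hw₀.2.2.2⟩ q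
        rw [← hms] at hcount
        have hmRpos : (0 : ℝ) < (m : ℝ) := by
          have : 0 < m := by omega
          exact_mod_cast this
        have hlog : (q : ℝ) * L0 ≤ Real.log ((LWords A m n).ncard) := by
          have h1 : ((ℓ : ℝ)) ^ q ≤ ((LWords A m n).ncard : ℝ) := by
            rw [show ((ℓ : ℝ)) ^ q = ((ℓ ^ q : ℕ) : ℝ) by push_cast; ring]
            exact_mod_cast hcount
          calc (q : ℝ) * L0 = Real.log ((ℓ : ℝ) ^ q) := by rw [Real.log_pow]
            _ ≤ Real.log ((LWords A m n).ncard) := by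
                apply Real.log_le_log _ h1
                have : (0 : ℝ) < (ℓ : ℝ) := by exact_mod_cast hℓ1
                positivity
        -- now the arithmetic : a * m ≤ q * L0
        have hmcast : (m : ℝ) = (m₀ : ℝ) * (q : ℝ) + (r : ℝ) + 1 + (N : ℝ) := by
          have h : m = m₀ * q + r + 1 + N := by omega
          exact_mod_cast congrArg (Nat.cast : ℕ → ℝ) h
        have hrR : (r : ℝ) ≤ (m₀ : ℝ) - 1 := by
          have : r + 1 ≤ m₀ := hrlt
          have := (Nat.cast_le (α := ℝ)).mpr this
          push_cast at this
          linarith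
        have h1 : ((N : ℝ) + (m₀ : ℝ) + 1) * L0 ≤ (m : ℝ) * δ := (div_le_iff₀ hδ).mp hm2
        have h4 : a * (m : ℝ) * (m₀ : ℝ) ≤ (q : ℝ) * L0 * (m₀ : ℝ) := by
          nlinarith [h1, hmcast, hrR, hL0, hδ]
        have hqm : a * (m : ℝ) ≤ (q : ℝ) * L0 := le_of_mul_le_mul_right h4 hm₀R
        have : a ≤ (q : ℝ) * L0 / (m : ℝ) := (le_div_iff₀ hmRpos).mpr hqm
        refine this.trans ?_
        gcongr
      exact absurd key2 (not_le.mpr ha1)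
  exact Filter.limsup_le_of_le hcobf (Filter.Eventually.of_forall key)
end

section
/- Let A be a 0-1 matrix over the positive integers that is uniformly column finite, let n be a positive integer such that L(m,n) is nonempty for every m ≥ 1, let P ≥ 1 be a real number, and let h, I', D' be real numbers such that liminf_{m→∞} (1/m)·log |L(m,n)| ≥ h, limsup_{m→∞} (1/m)·log |L(m,n)| ≤ h + I', and limsup_{m→∞} (1/m)·log D(m,n) ≤ D', where D(m,n) := max_{1≤p≤m−1} ( |L_p(m,n)|·|L(m−p,n)| / |L(m,n)| ) for m ≥ 2 and D(1,n) := 1. Then, setting |L_0(m,n)| := 1, one has limsup_{m→∞} (1/m)·log ( Σ_{p=0}^{m} |L_{m−p}(m,n)|·P^p ) ≤ max{h, log P} + I' + D'. -/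
/-- The distortion quantity
`D(m,n) = max_{1≤p≤m−1} (|L_p(m,n)|·|L(m−p,n)| / |L(m,n)|)` for `m ≥ 2`,
and `D(1,n) := 1`. -/
noncomputable def Dq (A : ℕ+ → ℕ+ → Bool) (n : ℕ+) (m : ℕ) : ℝ :=
  if h : 2 ≤ m then
    (Finset.Icc 1 (m - 1)).sup' (Finset.nonempty_Icc.mpr (by omega))
      (fun p => (((LPref A p m n).ncard : ℝ) * ((LWords A (m - p) n).ncard : ℝ))
        / ((LWords A m n).ncard : ℝ))
  else 1

variable (A : ℕ+ → ℕ+ → Bool) (n : ℕ+)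

lemma lwords_zero : LWords A 0 n = {[]} := by
  ext w
  constructor
  · rintro ⟨h1, -, -⟩; exact List.length_eq_zero_iff.mp h1
  · rintro rfl; exact ⟨rfl, List.isChain_nil, by simp⟩

lemma lwords_one : LWords A 1 n = (fun a => [a]) '' Set.Iic n := by
  ext w
  constructor
  · rintro ⟨h1, -, h3⟩
    obtain ⟨a, rfl⟩ := List.length_eq_one_iff.mp h1
    exact ⟨a, h3 a (by simp), rfl⟩
  · rintro ⟨a, ha, rfl⟩
    refine ⟨rfl, List.isChain_singleton _, by simpa using ha⟩

lemma col_finite {Mb : ℕ} (hUCF : ∀ j : ℕ+, {i : ℕ+ | A i j = true}.encard ≤ Mb) (j : ℕ+) :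
    {i : ℕ+ | A i j = true}.Finite ∧ {i : ℕ+ | A i j = true}.ncard ≤ Mb :=
  Set.encard_le_coe_iff_finite_ncard_le.mp (hUCF j)

lemma lwords_succ_subset (m : ℕ) (hm : 1 ≤ m) :
    LWords A (m+1) n ⊆ ⋃ t ∈ LWords A m n, (fun a => a :: t) '' {a | A a t.headI = true} := by
  rintro w ⟨hlen, hadm, hlast⟩
  match w, hlen with
  | a :: t, hlen =>
    have hlt : t.length = m := by simpa using hlen
    have htne : t ≠ [] := by
      intro hnil; rw [hnil] at hlt; simp at hlt; omega
    have htmem : t ∈ LWords A m n := by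
      refine ⟨hlt, hadm.tail, ?_⟩
      intro x hx
      apply hlast
      match t, htne with
      | b :: t', _ => rwa [List.getLast?_cons_cons]
    have hhead : A a t.headI = true := by
      match t, htne with
      | b :: t', _ => exact (List.isChain_cons_cons.mp hadm).1
    exact Set.mem_biUnion htmem ⟨a, hhead, rfl⟩

lemma iic_ncard_le : (Set.Iic n).ncard ≤ (n : ℕ) := by
  have h1 : (Set.Iic n).ncard = (Finset.Iic n).card := by
    rw [← Set.ncard_coe_finset]; congr 1; simp
  rw [h1]
  have h2 : (Finset.Iic n).card ≤ (Finset.Icc 1 (n:ℕ)).card := by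
    apply Finset.card_le_card_of_injOn (fun a : ℕ+ => (a : ℕ))
    · intro a ha
      simp only [Finset.mem_coe, Finset.mem_Iic] at ha
      exact Finset.mem_Icc.mpr ⟨a.one_le, by exact_mod_cast ha⟩
    · intro a _ b _ hab; exact_mod_cast PNat.coe_injective hab
  simpa [Nat.card_Icc] using h2

lemma lwords_fin_card {Mb : ℕ} (hUCF : ∀ j : ℕ+, {i : ℕ+ | A i j = true}.encard ≤ Mb)
    (hM : 1 ≤ Mb) :
    ∀ m, (LWords A m n).Finite ∧ (LWords A m n).ncard ≤ ((n : ℕ) * Mb) ^ m := by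
  intro m
  induction m with
  | zero => rw [lwords_zero]; exact ⟨Set.finite_singleton _, by simp⟩
  | succ m ih =>
    rcases Nat.eq_zero_or_pos m with rfl | hm
    · rw [lwords_one]
      constructor
      · exact (Set.finite_Iic n).image _
      · calc ((fun a => [a]) '' Set.Iic n).ncard ≤ (Set.Iic n).ncard :=
              Set.ncard_image_le (Set.finite_Iic n)
          _ ≤ (n : ℕ) := iic_ncard_le n
          _ ≤ ((n : ℕ) * Mb) ^ 1 := by rw [pow_one]; exact Nat.le_mul_of_pos_right _ hM
    · obtain ⟨hfin, hcard⟩ := ih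
      classical
      set S := hfin.toFinset with hS
      set T := S.biUnion (fun t => ((col_finite A hUCF t.headI).1.toFinset).image
        (fun a => a :: t)) with hT
      have hsub : LWords A (m+1) n ⊆ ↑T := by
        intro w hw
        obtain ⟨t, htmem, a, ha, rfl⟩ := by
          simpa using lwords_succ_subset A n m hm hw
        refine Finset.mem_coe.mpr (Finset.mem_biUnion.mpr ⟨t, ?_, ?_⟩)
        · simpa [hS] using htmem
        · exact Finset.mem_image.mpr ⟨a, by simpa using ha, rfl⟩
      refine ⟨T.finite_toSet.subset hsub, ?_⟩
      calc (LWords A (m+1) n).ncard ≤ (↑T : Set (List ℕ+)).ncard :=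
            Set.ncard_le_ncard hsub T.finite_toSet
        _ = T.card := Set.ncard_coe_finset T
        _ ≤ ∑ t ∈ S, (((col_finite A hUCF t.headI).1.toFinset).image
              (fun a => a :: t)).card := Finset.card_biUnion_le
        _ ≤ ∑ t ∈ S, Mb := by
            refine Finset.sum_le_sum fun t _ => ?_
            calc (((col_finite A hUCF t.headI).1.toFinset).image (fun a => a :: t)).card
                ≤ ((col_finite A hUCF t.headI).1.toFinset).card := Finset.card_image_le
              _ = {i : ℕ+ | A i t.headI = true}.ncard :=
                  (Set.ncard_eq_toFinset_card _ (col_finite A hUCF t.headI).1).symm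
              _ ≤ Mb := (col_finite A hUCF t.headI).2
        _ = S.card * Mb := by rw [Finset.sum_const, smul_eq_mul]
        _ = (LWords A m n).ncard * Mb := by rw [hS, ← Set.ncard_eq_toFinset_card _ hfin]
        _ ≤ ((n : ℕ) * Mb) ^ m * Mb := Nat.mul_le_mul_right _ hcard
        _ ≤ ((n : ℕ) * Mb) ^ (m+1) := by
            rw [pow_succ]
            exact Nat.mul_le_mul_left _ (Nat.le_mul_of_pos_left _ n.pos)

lemma lpref_eq_image (p m : ℕ) (hpm : p ≤ m) :
    LPref A p m n = List.take p '' LWords A m n := by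
  ext u
  constructor
  · rintro ⟨hlen, w, hw, hpre⟩
    refine ⟨w, hw, ?_⟩
    have := List.prefix_iff_eq_take.mp hpre
    rw [hlen] at this
    exact this.symm
  · rintro ⟨w, hw, rfl⟩
    refine ⟨?_, w, hw, List.take_prefix _ _⟩
    rw [List.length_take, hw.1]
    omega

lemma lpref_self (m : ℕ) : LPref A m m n = LWords A m n := by
  rw [lpref_eq_image A n m m le_rfl]
  ext u
  constructor
  · rintro ⟨w, hw, rfl⟩
    rwa [List.take_of_length_le (le_of_eq hw.1)]
  · intro hu
    exact ⟨u, hu, List.take_of_length_le (le_of_eq hu.1)⟩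

lemma split_le (m q : ℕ) (h1 : 1 ≤ q) (h2 : q + 1 ≤ m)
    (hfinm : (LWords A m n).Finite) (hfinq : (LPref A q m n).Finite)
    (hfin2 : (LWords A (m - q) n).Finite) :
    (LWords A m n).ncard ≤ (LPref A q m n).ncard * (LWords A (m - q) n).ncard := by
  classical
  have hinj : Set.InjOn (fun w : List ℕ+ => (w.take q, w.drop q)) (LWords A m n) := by
    intro w _ w' _ hww
    have h1 := congrArg Prod.fst hww
    have h2 := congrArg Prod.snd hww
    simp only at h1 h2
    rw [← List.take_append_drop q w, ← List.take_append_drop q w', h1, h2]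
  have hsub : (fun w : List ℕ+ => (w.take q, w.drop q)) '' LWords A m n ⊆
      (LPref A q m n) ×ˢ (LWords A (m - q) n) := by
    rintro _ ⟨w, hw, rfl⟩
    obtain ⟨hlen, hadm, hlast⟩ := hw
    constructor
    · refine ⟨?_, w, ⟨hlen, hadm, hlast⟩, List.take_prefix _ _⟩
      rw [List.length_take, hlen]; omega
    · refine ⟨by rw [List.length_drop, hlen], hadm.suffix (List.drop_suffix q w), ?_⟩
      intro x hx
      apply hlast
      have hdne : w.drop q ≠ [] := by
        intro hnil
        have := congrArg List.length hnil
        rw [List.length_drop, hlen] at this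
        simp at this; omega
      rw [← List.take_append_drop q w, List.getLast?_append_of_ne_nil _ hdne]
      exact hx
  calc (LWords A m n).ncard
      = ((fun w : List ℕ+ => (w.take q, w.drop q)) '' LWords A m n).ncard :=
        (Set.ncard_image_of_injOn hinj).symm
    _ ≤ ((LPref A q m n) ×ˢ (LWords A (m - q) n)).ncard :=
        Set.ncard_le_ncard hsub (hfinq.prod hfin2)
    _ = (LPref A q m n).ncard * (LWords A (m - q) n).ncard := by
        have e : ((LPref A q m n) ×ˢ (LWords A (m - q) n) : Set (List ℕ+ × List ℕ+))
            = ↑(hfinq.toFinset ×ˢ hfin2.toFinset) := by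
          rw [Finset.coe_product, hfinq.coe_toFinset, hfin2.coe_toFinset]
        rw [e, Set.ncard_coe_finset, Finset.card_product,
          ← Set.ncard_eq_toFinset_card _ hfinq, ← Set.ncard_eq_toFinset_card _ hfin2]

lemma lpref_finite (p m : ℕ) (hpm : p ≤ m) (hfin : (LWords A m n).Finite) :
    (LPref A p m n).Finite := by
  rw [lpref_eq_image A n p m hpm]; exact hfin.image _

lemma lpref_card_le (p m : ℕ) (hpm : p ≤ m) (hfin : (LWords A m n).Finite) :
    (LPref A p m n).ncard ≤ (LWords A m n).ncard := by
  rw [lpref_eq_image A n p m hpm]; exact Set.ncard_image_le hfin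

lemma lpref_nonempty (p m : ℕ) (hpm : p ≤ m) (hne : (LWords A m n).Nonempty) :
    (LPref A p m n).Nonempty := by
  rw [lpref_eq_image A n p m hpm]; exact hne.image _

section Main

variable {A} {n} {M : ℕ}
variable (hUCF : ∀ j : ℕ+, {i : ℕ+ | A i j = true}.encard ≤ M)
  (hM : 1 ≤ M) (hne : ∀ m : ℕ, 1 ≤ m → (LWords A m n).Nonempty)

include hUCF hM

lemma lw_fin (m : ℕ) : (LWords A m n).Finite := (lwords_fin_card A n hUCF hM m).1

include hne in
lemma lw_card_pos (m : ℕ) : 0 < (LWords A m n).ncard := by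
  rcases Nat.eq_zero_or_pos m with rfl | hm
  · rw [lwords_zero]; simp
  · exact (Set.ncard_pos (lw_fin hUCF hM m)).mpr (hne m hm)

include hne in
lemma one_le_Dq (m : ℕ) : 1 ≤ Dq A n m := by
  rw [Dq]
  split_ifs with h2
  · have h1mem : 1 ∈ Finset.Icc 1 (m - 1) := by
      rw [Finset.mem_Icc]; omega
    refine le_trans ?_ (Finset.le_sup' _ h1mem)
    rw [le_div_iff₀ (by exact_mod_cast lw_card_pos hUCF hM hne m)]
    have := split_le A n m 1 le_rfl (by omega) (lw_fin hUCF hM m)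
      (lpref_finite A n 1 m (by omega) (lw_fin hUCF hM m)) (lw_fin hUCF hM (m - 1))
    calc (1 : ℝ) * ((LWords A m n).ncard : ℝ) = ((LWords A m n).ncard : ℝ) := one_mul _
      _ ≤ (((LPref A 1 m n).ncard : ℝ) * ((LWords A (m - 1) n).ncard : ℝ)) := by
          exact_mod_cast this
  · exact le_rfl

include hne in
lemma Dq_le (m : ℕ) :
    Dq A n m ≤ (((n : ℕ) * M : ℕ) : ℝ) ^ m * (((n : ℕ) * M : ℕ) : ℝ) ^ m := by
  have hR1 : (1 : ℝ) ≤ (((n : ℕ) * M : ℕ) : ℝ) := by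
    have : 1 ≤ (n : ℕ) * M := Nat.one_le_iff_ne_zero.mpr
      (Nat.mul_ne_zero n.pos.ne' (by omega))
    exact_mod_cast this
  have hpow : ∀ k : ℕ, k ≤ m → (((n : ℕ) * M : ℕ) : ℝ) ^ k ≤ (((n : ℕ) * M : ℕ) : ℝ) ^ m :=
    fun k hk => pow_le_pow_right₀ hR1 hk
  rw [Dq]
  split_ifs with h2
  · apply Finset.sup'_le
    intro q hq
    rw [Finset.mem_Icc] at hq
    have hqm : q ≤ m := by omega
    have hcm : (1 : ℝ) ≤ ((LWords A m n).ncard : ℝ) := by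
      exact_mod_cast lw_card_pos hUCF hM hne m
    have key : ∀ k : ℕ, k ≤ m → ((LWords A k n).ncard : ℝ) ≤ (((n : ℕ) * M : ℕ) : ℝ) ^ m := by
      intro k hk
      calc ((LWords A k n).ncard : ℝ) ≤ (((n : ℕ) * M : ℕ) : ℝ) ^ k := by
            exact_mod_cast (lwords_fin_card A n hUCF hM k).2
        _ ≤ _ := hpow k hk
    calc (((LPref A q m n).ncard : ℝ) * ((LWords A (m - q) n).ncard : ℝ))
          / ((LWords A m n).ncard : ℝ)
        ≤ (((LPref A q m n).ncard : ℝ) * ((LWords A (m - q) n).ncard : ℝ)) := by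
          apply div_le_self (by positivity) hcm
      _ ≤ (((n : ℕ) * M : ℕ) : ℝ) ^ m * (((n : ℕ) * M : ℕ) : ℝ) ^ m := by
          apply mul_le_mul ?_ (key _ (by omega)) (by positivity) (by positivity)
          calc ((LPref A q m n).ncard : ℝ) ≤ ((LWords A m n).ncard : ℝ) := by
                exact_mod_cast lpref_card_le A n q m hqm (lw_fin hUCF hM m)
            _ ≤ _ := key m le_rfl
  · have h3 := hpow 0 (Nat.zero_le m)
    rw [pow_zero] at h3
    nlinarith

end Main

lemma myle_of_forall_pos {a b : ℝ} (H : ∀ ε : ℝ, 0 < ε → a ≤ b + ε) : a ≤ b := by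
  by_contra hc
  push_neg at hc
  have := H ((a - b) / 2) (by linarith)
  linarith


set_option maxHeartbeats 2000000 in
/-- let `A` be uniformly column finite, `n` such that `L(m,n)` is nonempty
for every `m ≥ 1`, `P ≥ 1`, and `h, I', D'` real numbers such that
`liminf_m (1/m)·log |L(m,n)| ≥ h`, `limsup_m (1/m)·log |L(m,n)| ≤ h + I'`, and
`limsup_m (1/m)·log D(m,n) ≤ D'`.  Then, setting `|L_0(m,n)| := 1`,
`limsup_m (1/m)·log (Σ_{p=0}^{m} |L_{m−p}(m,n)|·P^p) ≤ max{h, log P} + I' + D'`. -/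
theorem stmt19 (A : ℕ+ → ℕ+ → Bool) (M : ℕ)
    (hUCF : ∀ j : ℕ+, {i : ℕ+ | A i j = true}.encard ≤ M)
    (n : ℕ+) (hne : ∀ m : ℕ, 1 ≤ m → (LWords A m n).Nonempty)
    (P : ℝ) (hP : 1 ≤ P) (h I' D' : ℝ)
    (hlow : h ≤ Filter.liminf (fun m : ℕ =>
      Real.log ((LWords A m n).ncard) / (m : ℝ)) Filter.atTop)
    (hupp : Filter.limsup (fun m : ℕ =>
      Real.log ((LWords A m n).ncard) / (m : ℝ)) Filter.atTop ≤ h + I')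
    (hD : Filter.limsup (fun m : ℕ =>
      Real.log (Dq A n m) / (m : ℝ)) Filter.atTop ≤ D') :
    Filter.limsup (fun m : ℕ =>
        Real.log (∑ p ∈ Finset.range (m + 1),
          (if p = m then (1 : ℝ) else ((LPref A (m - p) m n).ncard : ℝ)) * P ^ p)
          / (m : ℝ)) Filter.atTop
      ≤ max h (Real.log P) + I' + D' := by
  classical
  have hP0 : (0 : ℝ) < P := lt_of_lt_of_le one_pos hP
  have hlogP : 0 ≤ Real.log P := Real.log_nonneg hP
  -- M ≥ 1
  have hM1 : 1 ≤ M := by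
    obtain ⟨w, hlen, hadm, -⟩ := hne 2 (by norm_num)
    match w, hlen with
    | [a, b], _ =>
      have hab : A a b = true := (List.isChain_cons_cons.mp hadm).1
      have h1 : (1 : ℕ∞) ≤ {i : ℕ+ | A i b = true}.encard := by
        rw [Set.one_le_encard_iff_nonempty]; exact ⟨a, hab⟩
      exact_mod_cast h1.trans (hUCF b)
  set R : ℝ := (((n : ℕ) * M : ℕ) : ℝ) with hRdef
  have hR1 : (1 : ℝ) ≤ R := by
    rw [hRdef]
    have : 1 ≤ (n : ℕ) * M := Nat.one_le_iff_ne_zero.mpr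
      (Nat.mul_ne_zero n.pos.ne' (by omega))
    exact_mod_cast this
  have hlogR : 0 ≤ Real.log R := Real.log_nonneg hR1
  have hcardpos : ∀ m : ℕ, (0 : ℝ) < ((LWords A m n).ncard : ℝ) := fun m => by
    exact_mod_cast lw_card_pos hUCF hM1 hne m
  have hcard1 : ∀ m : ℕ, (1 : ℝ) ≤ ((LWords A m n).ncard : ℝ) := fun m => by
    exact_mod_cast lw_card_pos hUCF hM1 hne m
  have hcardle : ∀ m : ℕ, ((LWords A m n).ncard : ℝ) ≤ R ^ m := fun m => by
    rw [hRdef]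
    exact_mod_cast (lwords_fin_card A n hUCF hM1 m).2
  -- boundedness of the two auxiliary sequences
  have hfL_lb : ∀ m : ℕ, 0 ≤ Real.log ((LWords A m n).ncard) / (m : ℝ) := fun m =>
    div_nonneg (Real.log_nonneg (hcard1 m)) (Nat.cast_nonneg m)
  have hfL_ub : ∀ m : ℕ, Real.log ((LWords A m n).ncard) / (m : ℝ) ≤ Real.log R := by
    intro m
    rcases Nat.eq_zero_or_pos m with rfl | hm
    · simpa using hlogR
    · have hm0 : (0 : ℝ) < m := by exact_mod_cast hm
      rw [div_le_iff₀ hm0]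
      calc Real.log ((LWords A m n).ncard) ≤ Real.log (R ^ m) :=
            Real.log_le_log (hcardpos m) (hcardle m)
        _ = Real.log R * m := by rw [Real.log_pow]; ring
  have hfD_lb : ∀ m : ℕ, 0 ≤ Real.log (Dq A n m) / (m : ℝ) := fun m =>
    div_nonneg (Real.log_nonneg (one_le_Dq hUCF hM1 hne m)) (Nat.cast_nonneg m)
  have hfD_ub : ∀ m : ℕ, Real.log (Dq A n m) / (m : ℝ) ≤ 2 * Real.log R := by
    intro m
    rcases Nat.eq_zero_or_pos m with rfl | hm
    · simpa using by positivity
    · have hm0 : (0 : ℝ) < m := by exact_mod_cast hm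
      rw [div_le_iff₀ hm0]
      calc Real.log (Dq A n m) ≤ Real.log (R ^ m * R ^ m) :=
            Real.log_le_log (lt_of_lt_of_le one_pos (one_le_Dq hUCF hM1 hne m))
              (Dq_le hUCF hM1 hne m)
        _ = Real.log (R ^ m) + Real.log (R ^ m) :=
            Real.log_mul (by positivity) (by positivity)
        _ = 2 * Real.log R * m := by rw [Real.log_pow]; ring
  have hbddL_le : Filter.IsBoundedUnder (· ≤ ·) Filter.atTop
      (fun m : ℕ => Real.log ((LWords A m n).ncard) / (m : ℝ)) :=
    Filter.isBoundedUnder_of ⟨Real.log R, hfL_ub⟩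
  have hbddL_ge : Filter.IsBoundedUnder (· ≥ ·) Filter.atTop
      (fun m : ℕ => Real.log ((LWords A m n).ncard) / (m : ℝ)) :=
    Filter.isBoundedUnder_of ⟨0, hfL_lb⟩
  have hbddD_le : Filter.IsBoundedUnder (· ≤ ·) Filter.atTop
      (fun m : ℕ => Real.log (Dq A n m) / (m : ℝ)) :=
    Filter.isBoundedUnder_of ⟨2 * Real.log R, hfD_ub⟩
  have hbddD_ge : Filter.IsBoundedUnder (· ≥ ·) Filter.atTop
      (fun m : ℕ => Real.log (Dq A n m) / (m : ℝ)) :=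
    Filter.isBoundedUnder_of ⟨0, hfD_lb⟩
  have hI'0 : 0 ≤ I' := by
    have h1 := Filter.liminf_le_limsup hbddL_le hbddL_ge
    linarith [hlow.trans (h1.trans hupp)]
  have hD'0 : 0 ≤ D' := by
    have h1 : (0 : ℝ) ≤ Filter.liminf (fun m : ℕ =>
        Real.log (Dq A n m) / (m : ℝ)) Filter.atTop :=
      Filter.le_liminf_of_le hbddD_le.isCoboundedUnder_ge
        (Filter.Eventually.of_forall hfD_lb)
    linarith [h1.trans ((Filter.liminf_le_limsup hbddD_le hbddD_ge).trans hD)]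
  -- the summand sequence, basic facts
  set S : ℕ → ℝ := fun m => ∑ p ∈ Finset.range (m + 1),
    (if p = m then (1 : ℝ) else ((LPref A (m - p) m n).ncard : ℝ)) * P ^ p with hSdef
  have hterm_nonneg : ∀ m p : ℕ,
      0 ≤ (if p = m then (1 : ℝ) else ((LPref A (m - p) m n).ncard : ℝ)) * P ^ p := by
    intro m p
    apply mul_nonneg _ (by positivity)
    split_ifs
    · norm_num
    · positivity
  have hS1 : ∀ m : ℕ, 1 ≤ S m := by
    intro m
    have hmem : m ∈ Finset.range (m + 1) := Finset.self_mem_range_succ m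
    have h1 := Finset.single_le_sum (f := fun p =>
      (if p = m then (1 : ℝ) else ((LPref A (m - p) m n).ncard : ℝ)) * P ^ p)
      (fun p _ => hterm_nonneg m p) hmem
    simp only [eq_self_iff_true, if_true, one_mul] at h1
    calc (1 : ℝ) = 1 ^ m := (one_pow m).symm
      _ ≤ P ^ m := pow_le_pow_left₀ (by norm_num) hP m
      _ ≤ S m := by rw [hSdef]; simpa using h1
  have hS0 : ∀ m : ℕ, (0 : ℝ) < S m := fun m => lt_of_lt_of_le one_pos (hS1 m)
  have hfS_lb : ∀ m : ℕ, 0 ≤ Real.log (S m) / (m : ℝ) := fun m =>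
    div_nonneg (Real.log_nonneg (hS1 m)) (Nat.cast_nonneg m)
  -- main estimate
  apply myle_of_forall_pos
  intro ε hε
  set δ : ℝ := ε / 4 with hδdef
  have hδ0 : 0 < δ := by positivity
  -- eventual bounds from hypotheses
  obtain ⟨a1, ha1⟩ := Filter.eventually_atTop.mp
    (Filter.eventually_lt_of_limsup_lt (b := h + I' + δ) (lt_of_le_of_lt hupp (by linarith)) hbddL_le)
  obtain ⟨p0, hp0⟩ := Filter.eventually_atTop.mp
    (Filter.eventually_lt_of_lt_liminf (b := h - δ) (lt_of_lt_of_le (by linarith : h - δ < h) hlow) hbddL_ge)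
  obtain ⟨a3, ha3⟩ := Filter.eventually_atTop.mp
    (Filter.eventually_lt_of_limsup_lt (b := D' + δ) (lt_of_le_of_lt hD (by linarith)) hbddD_le)
  set c : ℝ := Real.exp (-(p0 : ℝ) * |h - δ|) with hcdef
  have hc0 : 0 < c := Real.exp_pos _
  have hc1 : c ≤ 1 := by
    rw [hcdef, Real.exp_le_one_iff]
    have h5 := mul_nonneg (Nat.cast_nonneg (α := ℝ) p0) (abs_nonneg (h - δ))
    linarith
  have hcinv1 : (1 : ℝ) ≤ c⁻¹ := by
    rw [one_le_inv_iff₀]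
    exact ⟨hc0, hc1⟩
  -- lower bound on cardinalities
  have hlb : ∀ p : ℕ, 1 ≤ p →
      c * Real.exp ((p : ℝ) * (h - δ)) ≤ ((LWords A p n).ncard : ℝ) := by
    intro p hp
    rcases le_or_gt p0 p with hpp | hpp
    · have h1 := hp0 p hpp
      have hp0' : (0 : ℝ) < (p : ℝ) := by exact_mod_cast hp
      have h2 : (p : ℝ) * (h - δ) ≤ Real.log ((LWords A p n).ncard) := by
        have := (lt_div_iff₀ hp0').mp h1
        nlinarith
      calc c * Real.exp ((p : ℝ) * (h - δ)) ≤ 1 * Real.exp ((p : ℝ) * (h - δ)) := by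
            apply mul_le_mul_of_nonneg_right hc1 (Real.exp_nonneg _)
        _ = Real.exp ((p : ℝ) * (h - δ)) := one_mul _
        _ ≤ Real.exp (Real.log ((LWords A p n).ncard)) := Real.exp_le_exp.mpr h2
        _ = ((LWords A p n).ncard : ℝ) := Real.exp_log (hcardpos p)
    · have hple : ((p : ℝ)) ≤ (p0 : ℝ) := by exact_mod_cast hpp.le
      have h2 : (p : ℝ) * (h - δ) ≤ (p0 : ℝ) * |h - δ| := by
        have h3 := le_abs_self (h - δ)
        have h4 : (0 : ℝ) ≤ (p : ℝ) := Nat.cast_nonneg _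
        nlinarith [abs_nonneg (h - δ)]
      calc c * Real.exp ((p : ℝ) * (h - δ))
          = Real.exp (-(p0 : ℝ) * |h - δ| + (p : ℝ) * (h - δ)) := by
            rw [hcdef, ← Real.exp_add]
        _ ≤ Real.exp 0 := Real.exp_le_exp.mpr (by linarith)
        _ = 1 := Real.exp_zero
        _ ≤ ((LWords A p n).ncard : ℝ) := hcard1 p
  set E : ℝ := max h (Real.log P) + I' + D' with hEdef
  set m1 : ℕ := max (max a1 a3) (max p0 2) with hm1def
  -- pointwise bound for large m
  have hmain : ∀ m : ℕ, m1 ≤ m →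
      Real.log (S m) / (m : ℝ) ≤
        Real.log ((m : ℝ) + 1) / (m : ℝ) + Real.log c⁻¹ / (m : ℝ) + (E + 3 * δ) := by
    intro m hm
    have hm2 : 2 ≤ m := le_trans (le_trans (le_max_right _ _) (le_max_right _ _)) hm
    have hm0 : (0 : ℝ) < (m : ℝ) := by exact_mod_cast (by omega : 0 < m)
    have hLub : ((LWords A m n).ncard : ℝ) ≤ Real.exp ((m : ℝ) * (h + I' + δ)) := by
      have h1 := ha1 m (le_trans (le_trans (le_max_left _ _) (le_max_left _ _)) hm)
      have h2 : Real.log ((LWords A m n).ncard) ≤ (m : ℝ) * (h + I' + δ) := by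
        have := (div_lt_iff₀ hm0).mp h1
        nlinarith
      calc ((LWords A m n).ncard : ℝ)
          = Real.exp (Real.log ((LWords A m n).ncard)) := (Real.exp_log (hcardpos m)).symm
        _ ≤ _ := Real.exp_le_exp.mpr h2
    have hDub : Dq A n m ≤ Real.exp ((m : ℝ) * (D' + δ)) := by
      have h1 := ha3 m (le_trans (le_trans (le_max_right _ _) (le_max_left _ _)) hm)
      have h2 : Real.log (Dq A n m) ≤ (m : ℝ) * (D' + δ) := by
        have := (div_lt_iff₀ hm0).mp h1
        nlinarith
      calc Dq A n m = Real.exp (Real.log (Dq A n m)) :=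
            (Real.exp_log (lt_of_lt_of_le one_pos (one_le_Dq hUCF hM1 hne m))).symm
        _ ≤ _ := Real.exp_le_exp.mpr h2
    -- term bound
    have htb : ∀ p ∈ Finset.range (m + 1),
        (if p = m then (1 : ℝ) else ((LPref A (m - p) m n).ncard : ℝ)) * P ^ p ≤
          c⁻¹ * Real.exp ((m : ℝ) * (E + 3 * δ)) := by
      intro p hpmem
      have hpm : p ≤ m := by
        rw [Finset.mem_range] at hpmem; omega
      have hEexp : (m : ℝ) * (h + I' + δ) ≤ (m : ℝ) * (E + 3 * δ) := by
        apply mul_le_mul_of_nonneg_left _ hm0.le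
        have : h ≤ max h (Real.log P) := le_max_left _ _
        rw [hEdef]; linarith
      have hPp : P ^ p = Real.exp ((p : ℝ) * Real.log P) := by
        rw [Real.exp_nat_mul, Real.exp_log hP0]
      by_cases hpeq : p = m
      · subst hpeq
        rw [if_pos rfl, one_mul, hPp]
        calc Real.exp ((p : ℝ) * Real.log P) ≤ Real.exp ((p : ℝ) * (E + 3 * δ)) := by
              apply Real.exp_le_exp.mpr
              apply mul_le_mul_of_nonneg_left _ (Nat.cast_nonneg p)
              have : Real.log P ≤ max h (Real.log P) := le_max_right _ _
              rw [hEdef]; linarith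
          _ ≤ c⁻¹ * Real.exp ((p : ℝ) * (E + 3 * δ)) := by
              nth_rewrite 1 [← one_mul (Real.exp _)]
              exact mul_le_mul_of_nonneg_right hcinv1 (Real.exp_nonneg _)
      · rw [if_neg hpeq]
        by_cases hp0' : p = 0
        · subst hp0'
          have hlp : LPref A (m - 0) m n = LWords A m n := by
            rw [Nat.sub_zero]; exact lpref_self A n m
          rw [hlp, pow_zero, mul_one]
          calc ((LWords A m n).ncard : ℝ) ≤ Real.exp ((m : ℝ) * (h + I' + δ)) := hLub
            _ ≤ Real.exp ((m : ℝ) * (E + 3 * δ)) := Real.exp_le_exp.mpr hEexp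
            _ ≤ c⁻¹ * Real.exp ((m : ℝ) * (E + 3 * δ)) := by
                nth_rewrite 1 [← one_mul (Real.exp _)]
                exact mul_le_mul_of_nonneg_right hcinv1 (Real.exp_nonneg _)
        · -- main case 1 ≤ p ≤ m - 1
          have hp1 : 1 ≤ p := by omega
          have hplt : p < m := by omega
          have hqmem : m - p ∈ Finset.Icc 1 (m - 1) := by
            rw [Finset.mem_Icc]; omega
          have hmmp : m - (m - p) = p := by omega
          have hDqge : (((LPref A (m - p) m n).ncard : ℝ) * ((LWords A p n).ncard : ℝ))
              / ((LWords A m n).ncard : ℝ) ≤ Dq A n m := by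
            rw [Dq, dif_pos hm2]
            have h0 := Finset.le_sup'
              (fun q => (((LPref A q m n).ncard : ℝ) * ((LWords A (m - q) n).ncard : ℝ))
                / ((LWords A m n).ncard : ℝ)) hqmem
            rw [hmmp] at h0
            exact h0
          have step1 : ((LPref A (m - p) m n).ncard : ℝ) * ((LWords A p n).ncard : ℝ)
              ≤ Dq A n m * ((LWords A m n).ncard : ℝ) :=
            (div_le_iff₀ (hcardpos m)).mp hDqge
          have hcoef0 : (0 : ℝ) ≤ ((LPref A (m - p) m n).ncard : ℝ) := Nat.cast_nonneg _
          have hce : (0 : ℝ) < c * Real.exp ((p : ℝ) * (h - δ)) := by positivity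
          rw [← mul_le_mul_iff_of_pos_right hce]
          have hexpkey : (m : ℝ) * (D' + δ) + (m : ℝ) * (h + I' + δ) + (p : ℝ) * Real.log P
              ≤ (m : ℝ) * (E + 3 * δ) + (p : ℝ) * (h - δ) := by
            have hpm' : (p : ℝ) ≤ (m : ℝ) := by exact_mod_cast hpm
            have hp0'' : (0 : ℝ) ≤ (p : ℝ) := Nat.cast_nonneg _
            rw [hEdef]
            rcases le_total h (Real.log P) with hcase | hcase
            · rw [max_eq_right hcase]; nlinarith
            · rw [max_eq_left hcase]; nlinarith
          calc ((LPref A (m - p) m n).ncard : ℝ) * P ^ p * (c * Real.exp ((p : ℝ) * (h - δ)))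
              = (((LPref A (m - p) m n).ncard : ℝ) * (c * Real.exp ((p : ℝ) * (h - δ))))
                  * Real.exp ((p : ℝ) * Real.log P) := by rw [hPp]; ring
            _ ≤ (Dq A n m * ((LWords A m n).ncard : ℝ)) * Real.exp ((p : ℝ) * Real.log P) := by
                apply mul_le_mul_of_nonneg_right _ (Real.exp_nonneg _)
                calc ((LPref A (m - p) m n).ncard : ℝ) * (c * Real.exp ((p : ℝ) * (h - δ)))
                    ≤ ((LPref A (m - p) m n).ncard : ℝ) * ((LWords A p n).ncard : ℝ) :=
                      mul_le_mul_of_nonneg_left (hlb p hp1) hcoef0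
                  _ ≤ _ := step1
            _ ≤ (Real.exp ((m : ℝ) * (D' + δ)) * Real.exp ((m : ℝ) * (h + I' + δ)))
                  * Real.exp ((p : ℝ) * Real.log P) := by
                apply mul_le_mul_of_nonneg_right _ (Real.exp_nonneg _)
                exact mul_le_mul hDub hLub (hcardpos m).le (Real.exp_nonneg _)
            _ = Real.exp ((m : ℝ) * (D' + δ) + (m : ℝ) * (h + I' + δ) + (p : ℝ) * Real.log P) := by
                rw [← Real.exp_add, ← Real.exp_add]
            _ ≤ Real.exp ((m : ℝ) * (E + 3 * δ) + (p : ℝ) * (h - δ)) :=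
                Real.exp_le_exp.mpr hexpkey
            _ = c⁻¹ * Real.exp ((m : ℝ) * (E + 3 * δ)) * (c * Real.exp ((p : ℝ) * (h - δ))) := by
                rw [Real.exp_add]
                field_simp
    -- sum bound
    have hsum : S m ≤ ((m : ℝ) + 1) * (c⁻¹ * Real.exp ((m : ℝ) * (E + 3 * δ))) := by
      calc S m ≤ ∑ _p ∈ Finset.range (m + 1), c⁻¹ * Real.exp ((m : ℝ) * (E + 3 * δ)) :=
            Finset.sum_le_sum htb
        _ = ((m : ℝ) + 1) * (c⁻¹ * Real.exp ((m : ℝ) * (E + 3 * δ))) := by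
            rw [Finset.sum_const, Finset.card_range, nsmul_eq_mul]
            push_cast
            ring
    have hlog : Real.log (S m) ≤ Real.log ((m : ℝ) + 1) + Real.log c⁻¹
        + (m : ℝ) * (E + 3 * δ) := by
      calc Real.log (S m) ≤ Real.log (((m : ℝ) + 1) * (c⁻¹ * Real.exp ((m : ℝ) * (E + 3 * δ)))) :=
            Real.log_le_log (hS0 m) hsum
        _ = Real.log ((m : ℝ) + 1) + Real.log c⁻¹ + (m : ℝ) * (E + 3 * δ) := by
            rw [Real.log_mul (by positivity) (by positivity),
              Real.log_mul (by positivity) (by positivity), Real.log_exp]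
            ring
    calc Real.log (S m) / (m : ℝ)
        ≤ (Real.log ((m : ℝ) + 1) + Real.log c⁻¹ + (m : ℝ) * (E + 3 * δ)) / (m : ℝ) :=
          (div_le_div_iff_of_pos_right hm0).mpr hlog
      _ = Real.log ((m : ℝ) + 1) / (m : ℝ) + Real.log c⁻¹ / (m : ℝ) + (E + 3 * δ) := by
          field_simp
  -- tail tends to zero
  have t2 : Filter.Tendsto (fun m : ℕ => Real.log ((m : ℝ) + 1) / (m : ℝ))
      Filter.atTop (nhds 0) := by
    have t2' := (Real.tendsto_pow_log_div_mul_add_atTop 1 (-1) 1 one_ne_zero).comp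
      (Filter.tendsto_atTop_add_const_right Filter.atTop (1 : ℝ)
        tendsto_natCast_atTop_atTop)
    refine t2'.congr fun m => ?_
    simp only [Function.comp_apply, pow_one]
    congr 1
    ring
  have t1 := tendsto_const_div_atTop_nhds_zero_nat (Real.log c⁻¹)
  have htail : ∀ᶠ m : ℕ in Filter.atTop,
      Real.log ((m : ℝ) + 1) / (m : ℝ) + Real.log c⁻¹ / (m : ℝ) ≤ δ := by
    have t3 : Filter.Tendsto (fun m : ℕ => Real.log ((m : ℝ) + 1) / (m : ℝ)
        + Real.log c⁻¹ / (m : ℝ)) Filter.atTop (nhds 0) := by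
      simpa using t2.add t1
    exact t3.eventually_le_const hδ0
  -- conclude
  have hev : ∀ᶠ m : ℕ in Filter.atTop, Real.log (S m) / (m : ℝ) ≤ E + ε := by
    filter_upwards [Filter.eventually_ge_atTop m1, htail] with m hm htl
    have := hmain m hm
    have h4 : E + 3 * δ + δ = E + ε := by rw [hδdef]; ring
    linarith
  have hcob : Filter.IsCoboundedUnder (· ≤ ·) Filter.atTop
      (fun m : ℕ => Real.log (S m) / (m : ℝ)) :=
    Filter.isCoboundedUnder_le_of_le Filter.atTop hfS_lb
  calc Filter.limsup (fun m : ℕ => Real.log (S m) / (m : ℝ)) Filter.atTop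
      ≤ E + ε := Filter.limsup_le_of_le hcob hev
    _ = max h (Real.log P) + I' + D' + ε := by rw [hEdef]
end
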